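/- arXiv:2512.06162 — 4 statements merged into one kernel-verified Lean document; each statement's English description precedes it below -/
import Mathlib

section
/- Let $C_{p_1,\dots,p_l} = \frac{l!}{2^{\sum_k p_k} \prod_k p_k! \prod_k k^{p_k}}$ for nonnegative integers $p_1,\dots,p_l$ with $p_1+2p_2+\dots+lp_l=l$. Then these coefficients satisfy the recursion $C_{p_1,p_2,\dots,p_l} = \tfrac12 C_{p_1-1,p_2,\dots,p_{l-1}} + \sum_{n=1}^{l-1} n(p_n+1)\, C_{p_1,\dots,p_{n-1},p_n+1,p_{n+1}-1,p_{n+2},\dots,p_{l-1}}$, with initial value $C_0=1$ (terms with a negative index are zero). -/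
open Finset

/-- The coefficient `C_{p_1,…,p_l} = l! / (2^{∑ p_k} ∏ p_k! ∏ k^{p_k})`,
where the multi-index is encoded as `p : ℕ → ℕ` with `p (k-1)` playing the
role of the paper's `p_k` (only the first `l` values are read). -/
noncomputable def Ccoef (l : ℕ) (p : ℕ → ℕ) : ℚ :=
  (Nat.factorial l : ℚ) /
    (2 ^ (∑ k ∈ Finset.range l, p k) *
      (∏ k ∈ Finset.range l, ((p k).factorial : ℚ)) *
      ∏ k ∈ Finset.range l, ((k : ℚ) + 1) ^ p k)

lemma prod_upd1 (g : ℕ → ℕ → ℚ) (p : ℕ → ℕ) (a x m : ℕ) (ha : a < m) :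
    (∏ k ∈ range m, g k (Function.update p a x k)) * g a (p a)
      = (∏ k ∈ range m, g k (p k)) * g a x := by
  have ha' : a ∈ range m := mem_range.2 ha
  rw [← Finset.mul_prod_erase _ (fun k => g k (Function.update p a x k)) ha',
      ← Finset.mul_prod_erase _ (fun k => g k (p k)) ha']
  have h : ∏ k ∈ (range m).erase a, g k (Function.update p a x k)
      = ∏ k ∈ (range m).erase a, g k (p k) :=
    Finset.prod_congr rfl (fun k hk => by rw [Function.update_of_ne (mem_erase.1 hk).1])
  simp only [h, Function.update_self]
  ring

lemma sum_upd1 (p : ℕ → ℕ) (a x m : ℕ) (ha : a < m) :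
    (∑ k ∈ range m, Function.update p a x k) + p a
      = (∑ k ∈ range m, p k) + x := by
  have ha' : a ∈ range m := mem_range.2 ha
  rw [← Finset.add_sum_erase _ (fun k => Function.update p a x k) ha',
      ← Finset.add_sum_erase _ p ha']
  have h : ∑ k ∈ (range m).erase a, Function.update p a x k
      = ∑ k ∈ (range m).erase a, p k :=
    Finset.sum_congr rfl (fun k hk => by rw [Function.update_of_ne (mem_erase.1 hk).1])
  simp only [h, Function.update_self]
  ring

lemma prod_upd2 (g : ℕ → ℕ → ℚ) (p : ℕ → ℕ) (a b x y m : ℕ) (hab : a ≠ b)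
    (ha : a < m) (hb : b < m) :
    (∏ k ∈ range m, g k (Function.update (Function.update p a x) b y k)) * (g a (p a) * g b (p b))
      = (∏ k ∈ range m, g k (p k)) * (g a x * g b y) := by
  set q := Function.update (Function.update p a x) b y with hq
  have ha' : a ∈ range m := mem_range.2 ha
  have hb' : b ∈ (range m).erase a := mem_erase.2 ⟨(Ne.symm hab), mem_range.2 hb⟩
  rw [← Finset.mul_prod_erase _ (fun k => g k (q k)) ha',
      ← Finset.mul_prod_erase _ (fun k => g k (q k)) hb',
      ← Finset.mul_prod_erase _ (fun k => g k (p k)) ha',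
      ← Finset.mul_prod_erase _ (fun k => g k (p k)) hb']
  have h : ∏ k ∈ ((range m).erase a).erase b, g k (q k)
      = ∏ k ∈ ((range m).erase a).erase b, g k (p k) := by
    refine Finset.prod_congr rfl (fun k hk => ?_)
    have h1 := (mem_erase.1 hk).1
    have h2 := (mem_erase.1 (mem_erase.1 hk).2).1
    rw [hq, Function.update_of_ne h1, Function.update_of_ne h2]
  have hqa : q a = x := by rw [hq, Function.update_of_ne hab, Function.update_self]
  have hqb : q b = y := by rw [hq, Function.update_self]
  rw [h, hqa, hqb]; ring

lemma sum_upd2 (p : ℕ → ℕ) (a b x y m : ℕ) (hab : a ≠ b)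
    (ha : a < m) (hb : b < m) :
    (∑ k ∈ range m, Function.update (Function.update p a x) b y k) + (p a + p b)
      = (∑ k ∈ range m, p k) + (x + y) := by
  set q := Function.update (Function.update p a x) b y with hq
  have ha' : a ∈ range m := mem_range.2 ha
  have hb' : b ∈ (range m).erase a := mem_erase.2 ⟨(Ne.symm hab), mem_range.2 hb⟩
  rw [← Finset.add_sum_erase _ (fun k => q k) ha',
      ← Finset.add_sum_erase _ (fun k => q k) hb',
      ← Finset.add_sum_erase _ p ha',
      ← Finset.add_sum_erase _ p hb']
  have h : ∑ k ∈ ((range m).erase a).erase b, q k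
      = ∑ k ∈ ((range m).erase a).erase b, p k := by
    refine Finset.sum_congr rfl (fun k hk => ?_)
    have h1 := (mem_erase.1 hk).1
    have h2 := (mem_erase.1 (mem_erase.1 hk).2).1
    rw [hq, Function.update_of_ne h1, Function.update_of_ne h2]
  have hqa : q a = x := by rw [hq, Function.update_of_ne hab, Function.update_self]
  have hqb : q b = y := by rw [hq, Function.update_self]
  rw [h, hqa, hqb]; ring

lemma fact_pos_prod (m : ℕ) (p : ℕ → ℕ) : (0:ℚ) < ∏ k ∈ range m, ((p k).factorial : ℚ) :=
  Finset.prod_pos (fun k _ => by positivity)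

lemma pow_pos_prod (m : ℕ) (p : ℕ → ℕ) : (0:ℚ) < ∏ k ∈ range m, ((k:ℚ)+1) ^ p k :=
  Finset.prod_pos (fun k _ => by positivity)

lemma termA (m n : ℕ) (p : ℕ → ℕ) (hn1 : 1 ≤ n) (hnm : n < m) (hpn : 1 ≤ p n) :
    (n : ℚ) * ((p (n-1) : ℚ) + 1) *
      Ccoef m (Function.update (Function.update p (n-1) (p (n-1) + 1)) n (p n - 1))
    = (m.factorial : ℚ) * ((n:ℚ)+1) * (p n) /
      (2 ^ (∑ k ∈ range m, p k) * (∏ k ∈ range m, ((p k).factorial : ℚ)) *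
        ∏ k ∈ range m, ((k:ℚ)+1)^(p k)) := by
  have hab : n - 1 ≠ n := by omega
  have ha : n - 1 < m := by omega
  set q := Function.update (Function.update p (n-1) (p (n-1) + 1)) n (p n - 1) with hq
  set S := ∑ k ∈ range m, p k with hS
  set PF := ∏ k ∈ range m, ((p k).factorial : ℚ) with hPFdef
  set PP := ∏ k ∈ range m, ((k:ℚ)+1)^(p k) with hPPdef
  set Sq := ∑ k ∈ range m, q k with hSq
  set PFq := ∏ k ∈ range m, ((q k).factorial : ℚ) with hPFqdef
  set PPq := ∏ k ∈ range m, ((k:ℚ)+1)^(q k) with hPPqdef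
  have hSeq : Sq = S := by
    have hs := sum_upd2 p (n-1) n (p (n-1) + 1) (p n - 1) m hab ha hnm
    simp only [← hq] at hs
    omega
  have hPF : PF * ((p (n-1):ℚ)+1) = PFq * (p n : ℚ) := by
    have h := prod_upd2 (fun _ x => (x.factorial : ℚ)) p (n-1) n (p (n-1) + 1) (p n - 1) m hab ha hnm
    simp only [← hq, ← hPFdef, ← hPFqdef] at h
    have e1 : ((p (n-1) + 1).factorial : ℚ) = ((p (n-1):ℚ)+1) * ((p (n-1)).factorial : ℚ) := by
      rw [Nat.factorial_succ]; push_cast; ring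
    have e2 : ((p n).factorial : ℚ) = (p n : ℚ) * ((p n - 1).factorial : ℚ) := by
      have : p n = (p n - 1) + 1 := by omega
      rw [this, Nat.factorial_succ]; push_cast; ring
    rw [e1, e2] at h
    have hc : ((p (n-1)).factorial : ℚ) * ((p n - 1).factorial : ℚ) ≠ 0 := by positivity
    apply mul_right_cancel₀ hc
    linear_combination -h
  have hPP : PP * (n:ℚ) = PPq * ((n:ℚ)+1) := by
    have h := prod_upd2 (fun k x => ((k:ℚ)+1)^x) p (n-1) n (p (n-1) + 1) (p n - 1) m hab ha hnm
    simp only [← hq, ← hPFdef, ← hPPdef, ← hPPqdef] at h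
    have hcast : ((n-1 : ℕ) : ℚ) + 1 = (n:ℚ) := by
      have h' : (n-1)+1 = n := by omega
      exact_mod_cast congrArg (Nat.cast (R := ℚ)) h'
    rw [hcast] at h
    have e1 : (n:ℚ)^(p (n-1) + 1) = (n:ℚ)^(p (n-1)) * (n:ℚ) := pow_succ _ _
    have e2 : ((n:ℚ)+1)^(p n) = ((n:ℚ)+1)^(p n - 1) * ((n:ℚ)+1) := by
      conv_lhs => rw [show p n = (p n - 1) + 1 by omega]
      exact pow_succ _ _
    rw [e1, e2] at h
    have hc : (n:ℚ)^(p (n-1)) * ((n:ℚ)+1)^(p n - 1) ≠ 0 := by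
      have hn0 : (0:ℚ) < (n:ℚ) := by exact_mod_cast hn1
      positivity
    apply mul_right_cancel₀ hc
    linear_combination -h
  have hPFpos : (0:ℚ) < PF := fact_pos_prod m p
  have hPPpos : (0:ℚ) < PP := pow_pos_prod m p
  have hPFqpos : (0:ℚ) < PFq := fact_pos_prod m q
  have hPPqpos : (0:ℚ) < PPq := pow_pos_prod m q
  have h2S : (0:ℚ) < 2^S := by positivity
  rw [Ccoef]
  simp only [← hSq, ← hPFqdef, ← hPPqdef, hSeq]
  rw [mul_div_assoc', div_eq_div_iff (by positivity) (by positivity)]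
  linear_combination ((m.factorial : ℚ) * PP * (n:ℚ) * 2^S) * hPF +
    ((m.factorial : ℚ) * PFq * (p n : ℚ) * 2^S) * hPP

lemma term0 (m : ℕ) (p : ℕ → ℕ) (hm : 1 ≤ m) (hp0 : 1 ≤ p 0) :
    (1/2 : ℚ) * Ccoef m (Function.update p 0 (p 0 - 1))
    = (m.factorial : ℚ) * (p 0 : ℚ) /
      (2 ^ (∑ k ∈ range m, p k) * (∏ k ∈ range m, ((p k).factorial : ℚ)) *
        ∏ k ∈ range m, ((k:ℚ)+1)^(p k)) := by
  have h0 : 0 < m := hm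
  set q := Function.update p 0 (p 0 - 1) with hq
  set S := ∑ k ∈ range m, p k with hS
  set PF := ∏ k ∈ range m, ((p k).factorial : ℚ) with hPFdef
  set PP := ∏ k ∈ range m, ((k:ℚ)+1)^(p k) with hPPdef
  set Sq := ∑ k ∈ range m, q k with hSq
  set PFq := ∏ k ∈ range m, ((q k).factorial : ℚ) with hPFqdef
  set PPq := ∏ k ∈ range m, ((k:ℚ)+1)^(q k) with hPPqdef
  have hSeq : S = Sq + 1 := by
    have hs := sum_upd1 p 0 (p 0 - 1) m h0
    simp only [← hq] at hs
    omega
  have hPF : PF = PFq * (p 0 : ℚ) := by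
    have h := prod_upd1 (fun _ x => (x.factorial : ℚ)) p 0 (p 0 - 1) m h0
    simp only [← hq, ← hPFdef, ← hPFqdef] at h
    have e2 : ((p 0).factorial : ℚ) = (p 0 : ℚ) * ((p 0 - 1).factorial : ℚ) := by
      have h' : p 0 = (p 0 - 1) + 1 := by omega
      rw [h', Nat.factorial_succ]; push_cast; ring
    rw [e2] at h
    have hc : ((p 0 - 1).factorial : ℚ) ≠ 0 := by positivity
    apply mul_right_cancel₀ hc
    linear_combination -h
  have hPP : PPq = PP := by
    have h := prod_upd1 (fun k x => ((k:ℚ)+1)^x) p 0 (p 0 - 1) m h0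
    simp only [← hq, ← hPPdef, ← hPPqdef] at h
    norm_num at h
    exact h
  have hPFqpos : (0:ℚ) < PFq := fact_pos_prod m q
  have hPPqpos : (0:ℚ) < PPq := pow_pos_prod m q
  have h2S : (0:ℚ) < 2^Sq := by positivity
  rw [Ccoef]
  simp only [← hSq, ← hPFqdef, ← hPPqdef, hSeq, hPF, hPP, pow_succ]
  have hp0' : (0:ℚ) < (p 0 : ℚ) := by exact_mod_cast hp0
  field_simp

lemma Ccoef_single (m j : ℕ) (hj : j < m) (p : ℕ → ℕ) (hpj : p j = 1)
    (h0 : ∀ k < m, k ≠ j → p k = 0) :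
    Ccoef m p = (m.factorial : ℚ) / (2 * ((j:ℚ)+1)) := by
  rw [Ccoef]
  have hS : ∑ k ∈ range m, p k = 1 := by
    rw [Finset.sum_eq_single_of_mem j (mem_range.2 hj)
      (fun k hk hkj => h0 k (mem_range.1 hk) hkj), hpj]
  have hPF : (∏ k ∈ range m, ((p k).factorial : ℚ)) = 1 := by
    apply Finset.prod_eq_one
    intro k hk
    rcases eq_or_ne k j with h | h
    · rw [h, hpj]; norm_num
    · rw [h0 k (mem_range.1 hk) h]; norm_num
  have hPP : (∏ k ∈ range m, ((k:ℚ)+1)^(p k)) = (j:ℚ)+1 := by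
    rw [Finset.prod_eq_single_of_mem j (mem_range.2 hj)
      (fun k hk hkj => by rw [h0 k (mem_range.1 hk) hkj, pow_zero]), hpj, pow_one]
  rw [hS, hPF, hPP]
  norm_num

lemma Ccoef_succ_of_zero (m : ℕ) (p : ℕ → ℕ) (hpm : p m = 0) :
    Ccoef (m+1) p = ((m+1).factorial : ℚ) /
      (2 ^ (∑ k ∈ range m, p k) * (∏ k ∈ range m, ((p k).factorial : ℚ)) *
        ∏ k ∈ range m, ((k:ℚ)+1)^(p k)) := by
  rw [Ccoef, Finset.sum_range_succ, Finset.prod_range_succ, Finset.prod_range_succ, hpm]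
  norm_num

/-- The recursion for the coefficients `C`, with initial value `C_0 = 1`;
terms in which an index would become negative are interpreted as zero. -/
theorem stmt0 (l : ℕ) (hl : 1 ≤ l) (p : ℕ → ℕ)
    (hp : ∑ k ∈ Finset.range l, (k + 1) * p k = l) :
    (∀ q : ℕ → ℕ, Ccoef 0 q = 1) ∧
    Ccoef l p =
      (if 1 ≤ p 0 then (1 / 2 : ℚ) * Ccoef (l - 1) (Function.update p 0 (p 0 - 1)) else 0) +
      ∑ n ∈ Finset.Icc 1 (l - 1),
        (if 1 ≤ p n then
          (n : ℚ) * ((p (n - 1) : ℚ) + 1) *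
            Ccoef (l - 1)
              (Function.update (Function.update p (n - 1) (p (n - 1) + 1)) n (p n - 1))
        else 0) := by
  constructor
  · intro q
    simp [Ccoef]
  obtain ⟨m, rfl⟩ : ∃ m, l = m + 1 := ⟨l - 1, by omega⟩
  simp only [Nat.add_sub_cancel]
  rcases Nat.eq_zero_or_pos m with rfl | hm
  · -- l = 1
    have hp0 : p 0 = 1 := by simpa using hp
    rw [show Finset.Icc 1 0 = ∅ from rfl, Finset.sum_empty]
    rw [if_pos (by omega : 1 ≤ p 0)]
    have h1 : Ccoef 1 p = 1/2 := by
      rw [Ccoef_single 1 0 (by omega) p hp0 (fun k hk _ => by omega)]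
      norm_num
    have h0 : Ccoef 0 (Function.update p 0 (p 0 - 1)) = 1 := by simp [Ccoef]
    rw [h1, h0]
    norm_num
  rcases Nat.eq_zero_or_pos (p m) with hpm | hpm
  · -- Case A : p m = 0
    set S := ∑ k ∈ range m, p k with hS
    set PF := ∏ k ∈ range m, ((p k).factorial : ℚ) with hPFdef
    set PP := ∏ k ∈ range m, ((k:ℚ)+1)^(p k) with hPPdef
    set D := 2 ^ S * PF * PP with hD
    have hfirst : (if 1 ≤ p 0 then (1/2 : ℚ) * Ccoef m (Function.update p 0 (p 0 - 1)) else 0)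
        = (m.factorial : ℚ) * (p 0 : ℚ) / D := by
      by_cases h : 1 ≤ p 0
      · rw [if_pos h, term0 m p hm h]
      · rw [if_neg h]
        have : p 0 = 0 := by omega
        rw [this]
        norm_num
    have hsum : ∀ n ∈ Finset.Icc 1 m,
        (if 1 ≤ p n then
          (n : ℚ) * ((p (n - 1) : ℚ) + 1) *
            Ccoef m (Function.update (Function.update p (n - 1) (p (n - 1) + 1)) n (p n - 1))
        else 0) = (m.factorial : ℚ) * ((n:ℚ)+1) * (p n : ℚ) / D := by
      intro n hn
      obtain ⟨hn1, hnm⟩ := Finset.mem_Icc.1 hn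
      rcases eq_or_lt_of_le hnm with rfl | hlt
      · rw [if_neg (by omega), hpm]
        norm_num
      · by_cases h : 1 ≤ p n
        · rw [if_pos h, termA m n p hn1 hlt h]
        · rw [if_neg h]
          have : p n = 0 := by omega
          rw [this]
          norm_num
    rw [Finset.sum_congr rfl hsum, hfirst, Ccoef_succ_of_zero m p hpm]
    rw [← hS, ← hPFdef, ← hPPdef, ← hD]
    rw [← Finset.sum_div, ← add_div]
    have hIcc : Finset.Icc 1 m = (Finset.range (m+1)).erase 0 := by
      ext k
      simp only [Finset.mem_Icc, Finset.mem_erase, Finset.mem_range]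
      omega
    have hp' : (∑ k ∈ range (m+1), ((k:ℚ)+1) * (p k : ℚ)) = (m:ℚ) + 1 := by
      have h' : ((∑ k ∈ range (m+1), (k+1) * p k : ℕ) : ℚ) = ((m+1 : ℕ) : ℚ) :=
        congrArg (Nat.cast (R := ℚ)) hp
      push_cast at h'
      exact h'
    have hnum : (m.factorial : ℚ) * (p 0 : ℚ) +
        ∑ n ∈ Finset.Icc 1 m, (m.factorial : ℚ) * ((n:ℚ)+1) * (p n : ℚ)
        = ((m+1).factorial : ℚ) := by
      have hsplit := Finset.add_sum_erase (range (m+1))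
        (fun k => (m.factorial : ℚ) * ((k:ℚ)+1) * (p k : ℚ)) (mem_range.2 (Nat.succ_pos m))
      rw [← hIcc] at hsplit
      norm_num at hsplit
      rw [hsplit]
      have hms : ∑ x ∈ range (m+1), (m.factorial:ℚ) * ((x:ℚ)+1) * ((p x : ℕ):ℚ)
          = (m.factorial:ℚ) * ∑ x ∈ range (m+1), ((x:ℚ)+1) * ((p x : ℕ):ℚ) := by
        rw [Finset.mul_sum]
        exact Finset.sum_congr rfl (fun k _ => by ring)
      rw [hms, hp', Nat.factorial_succ]
      push_cast
      ring
    rw [hnum]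
  · -- Case B : p m ≥ 1
    have hsum_le : (m+1) * p m ≤ m+1 := by
      have h' : (m+1) * p m ≤ ∑ k ∈ range (m+1), (k+1) * p k :=
        Finset.single_le_sum (f := fun k => (k+1) * p k) (fun k _ => Nat.zero_le _)
          (mem_range.2 (Nat.lt_succ_self m))
      omega
    have hpm1 : p m = 1 := by nlinarith
    have hrest : ∑ k ∈ range m, (k+1) * p k = 0 := by
      have h' := Finset.sum_range_succ (fun k => (k+1) * p k) m
      rw [hpm1] at h'
      omega
    have h0 : ∀ k < m, p k = 0 := by
      intro k hk
      have h'' := (Finset.sum_eq_zero_iff.1 hrest) k (mem_range.2 hk)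
      simp only [Nat.mul_eq_zero] at h''
      omega
    have hLHS : Ccoef (m+1) p = (m.factorial : ℚ) / 2 := by
      rw [Ccoef_single (m+1) m (by omega) p hpm1 (fun k hk hkm => h0 k (by omega))]
      rw [Nat.factorial_succ]
      have : ((m:ℚ)+1) ≠ 0 := by positivity
      field_simp
      push_cast; ring
    rw [hLHS, if_neg (by rw [h0 0 hm]; omega)]
    rw [Finset.sum_eq_single_of_mem m (Finset.mem_Icc.2 ⟨hm, le_refl m⟩)]
    · rw [if_pos (by omega)]
      have hm1 : p (m-1) = 0 := h0 (m-1) (by omega)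
      have hq : Ccoef m (Function.update (Function.update p (m-1) (p (m-1) + 1)) m (p m - 1))
          = (m.factorial : ℚ) / (2 * ((m-1 : ℕ) : ℚ) + 2) := by
        rw [Ccoef_single m (m-1) (by omega) _ ?_ ?_]
        · ring_nf
        · rw [Function.update_of_ne (by omega), Function.update_self, hm1]
        · intro k hk hkm
          rw [Function.update_of_ne (by omega), Function.update_of_ne hkm]
          exact h0 k hk
      rw [hq, hm1]
      have hcast : ((m-1 : ℕ) : ℚ) = (m:ℚ) - 1 := by
        have h' : ((m-1)+1 : ℕ) = m := by omega
        have := congrArg (Nat.cast (R := ℚ)) h'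
        push_cast at this
        linarith
      rw [hcast, show (2*((m:ℚ)-1)+2) = 2*(m:ℚ) by ring]
      have hm0 : (m:ℚ) ≠ 0 := by
        have : (0:ℚ) < (m:ℚ) := by exact_mod_cast hm
        positivity
      field_simp
      ring
    · intro n hn hnm
      obtain ⟨hn1, hnm'⟩ := Finset.mem_Icc.1 hn
      rw [if_neg (by rw [h0 n (by omega)]; omega)]
end

section
/- With $L_n$ defined as the polynomial $L_n = \sum_{p_1+2p_2+\dots+np_n=n} \frac{n!\,\Sigma_1^{p_1}\cdots\Sigma_n^{p_n}}{2^{\sum p_k}\prod p_k!\prod k^{p_k}}$ in the variables $\Sigma_k = (-y_0)^{-k}+(1-y_0)^{-k}+(x-y_0)^{-k}$, the partial derivative with respect to $y_0$ satisfies $\partial_{y_0} L_n = L_{n+1} - L_n L_1$. -/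
open Finset

/-- `Σ_k = (-y)^{-k} + (1-y)^{-k} + (x-y)^{-k}`. -/
noncomputable def Sig (x y : ℂ) (k : ℕ) : ℂ :=
  ((-y) ^ k)⁻¹ + ((1 - y) ^ k)⁻¹ + ((x - y) ^ k)⁻¹

/-- The Bell-type polynomial
`L_n = ∑_{p_1+2p_2+⋯+np_n=n} n! Σ_1^{p_1}⋯Σ_n^{p_n} / (2^{∑ p_k} ∏ p_k! ∏ k^{p_k})`,
the sum running over all nonnegative multi-indices `(p_1,…,p_n)` with
`p_1 + 2p_2 + ⋯ + n p_n = n` (encoded as `p : Fin n → ℕ`). -/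
noncomputable def Lsum (x y : ℂ) (n : ℕ) : ℂ :=
  ∑ p ∈ (Fintype.piFinset fun _ : Fin n => Finset.range (n + 1)).filter
      (fun p => ∑ i : Fin n, (i.1 + 1) * p i = n),
    (n.factorial : ℂ) * (∏ i : Fin n, Sig x y (i.1 + 1) ^ p i) /
      (2 ^ (∑ i : Fin n, p i) * (∏ i : Fin n, ((p i).factorial : ℂ)) *
        ∏ i : Fin n, ((i.1 : ℂ) + 1) ^ p i)

/-- the index set -/
def Aset (N n : ℕ) : Finset (Fin N → ℕ) :=
  (Fintype.piFinset fun _ : Fin N => Finset.range (n + 1)).filter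
    (fun p => ∑ i : Fin N, (i.1 + 1) * p i = n)

noncomputable def Wt (x y : ℂ) (n : ℕ) {N : ℕ} (p : Fin N → ℕ) : ℂ :=
  (n.factorial : ℂ) * (∏ i : Fin N, Sig x y (i.1 + 1) ^ p i) /
      (2 ^ (∑ i : Fin N, p i) * (∏ i : Fin N, ((p i).factorial : ℂ)) *
        ∏ i : Fin N, ((i.1 : ℂ) + 1) ^ p i)

noncomputable def Vt (x y : ℂ) {N : ℕ} (p : Fin N → ℕ) : ℂ :=
  (∏ i : Fin N, Sig x y (i.1 + 1) ^ p i) /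
      (2 ^ (∑ i : Fin N, p i) * (∏ i : Fin N, ((p i).factorial : ℂ)) *
        ∏ i : Fin N, ((i.1 : ℂ) + 1) ^ p i)

lemma Wt_eq_Vt (x y : ℂ) (n : ℕ) {N : ℕ} (p : Fin N → ℕ) :
    Wt x y n p = (n.factorial : ℂ) * Vt x y p := by
  rw [Wt, Vt, mul_div_assoc]

lemma Lsum_eq (x y : ℂ) (n : ℕ) : Lsum x y n = ∑ p ∈ Aset n n, Wt x y n p := rfl

lemma mem_Aset {N n : ℕ} {p : Fin N → ℕ} :
    p ∈ Aset N n ↔ ∑ i : Fin N, (i.1 + 1) * p i = n := by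
  simp only [Aset, mem_filter, Fintype.mem_piFinset, mem_range]
  refine ⟨And.right, fun h => ⟨fun i => ?_, h⟩⟩
  have h1 : p i ≤ (i.1 + 1) * p i := Nat.le_mul_of_pos_left _ (Nat.succ_pos _)
  have h2 : (i.1 + 1) * p i ≤ ∑ i : Fin N, (i.1 + 1) * p i :=
    Finset.single_le_sum (f := fun i => (i.1 + 1) * p i) (fun _ _ => Nat.zero_le _) (mem_univ i)
  omega

lemma prod_comp_update' {M : Type*} [CommMonoid M] {N : ℕ} (s : Finset (Fin N))
    (F : Fin N → ℕ → M) (p : Fin N → ℕ) (a : Fin N) (v : ℕ) (ha : a ∈ s) :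
    ∏ i ∈ s, F i (Function.update p a v i) = F a v * ∏ i ∈ s.erase a, F i (p i) := by
  rw [← Finset.mul_prod_erase s _ ha, Function.update_self]
  congr 1
  exact Finset.prod_congr rfl fun i hi => by
    rw [Function.update_of_ne (Finset.ne_of_mem_erase hi)]

lemma prod_eq_mul_erase {M : Type*} [CommMonoid M] {N : ℕ} (s : Finset (Fin N))
    (F : Fin N → M) (a : Fin N) (ha : a ∈ s) :
    ∏ i ∈ s, F i = F a * ∏ i ∈ s.erase a, F i :=
  (Finset.mul_prod_erase s F ha).symm

lemma sum_comp_update' {N : ℕ} (s : Finset (Fin N))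
    (F : Fin N → ℕ → ℕ) (p : Fin N → ℕ) (a : Fin N) (v : ℕ) (ha : a ∈ s) :
    ∑ i ∈ s, F i (Function.update p a v i) = F a v + ∑ i ∈ s.erase a, F i (p i) := by
  rw [← Finset.add_sum_erase s _ ha, Function.update_self]
  congr 1
  exact Finset.sum_congr rfl fun i hi => by
    rw [Function.update_of_ne (Finset.ne_of_mem_erase hi)]

lemma sum_eq_add_erase {N : ℕ} (s : Finset (Fin N))
    (F : Fin N → ℕ) (a : Fin N) (ha : a ∈ s) :
    ∑ i ∈ s, F i = F a + ∑ i ∈ s.erase a, F i :=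
  (Finset.add_sum_erase s F ha).symm

/-- padding: L_n as a sum over `Fin (n+1)` multi-indices -/
lemma pad (x y : ℂ) (n : ℕ) : Lsum x y n = ∑ p ∈ Aset (n + 1) n, Wt x y n p := by
  rw [Lsum_eq]
  refine Finset.sum_nbij' (fun p => Fin.snoc p 0) (fun q => q ∘ Fin.castSucc) ?_ ?_ ?_ ?_ ?_
  · intro p hp
    rw [mem_Aset] at hp ⊢
    rw [Fin.sum_univ_castSucc]
    simp [Fin.snoc_castSucc, Fin.snoc_last, hp]
  · intro q hq
    rw [mem_Aset] at hq ⊢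
    rw [Fin.sum_univ_castSucc] at hq
    have hlast : q (Fin.last n) = 0 := by
      by_contra h
      have : (n + 1) * q (Fin.last n) ≥ n + 1 := Nat.le_mul_of_pos_right _ (Nat.pos_of_ne_zero h)
      simp only [Fin.val_last] at hq
      omega
    simp only [hlast, Fin.val_last, Nat.mul_zero, add_zero] at hq
    simpa using hq
  · intro p hp
    funext i
    simp [Fin.snoc_castSucc]
  · intro q hq
    rw [mem_Aset] at hq
    rw [Fin.sum_univ_castSucc] at hq
    have hlast : q (Fin.last n) = 0 := by
      by_contra h
      have : (n + 1) * q (Fin.last n) ≥ n + 1 := Nat.le_mul_of_pos_right _ (Nat.pos_of_ne_zero h)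
      simp only [Fin.val_last] at hq
      omega
    funext i
    refine Fin.lastCases ?_ ?_ i
    · simp [Fin.snoc_last, hlast]
    · intro j; simp [Fin.snoc_castSucc]
  · intro p hp
    rw [Wt, Wt]
    rw [Fin.sum_univ_castSucc, Fin.prod_univ_castSucc, Fin.prod_univ_castSucc,
      Fin.prod_univ_castSucc]
    simp [Fin.snoc_castSucc, Fin.snoc_last]

section Deriv

variable {x y0 : ℂ}

lemma hasDerivAt_inv_pow (a : ℂ) (h : a - y0 ≠ 0) (k : ℕ) :
    HasDerivAt (fun y => ((a - y) ^ k)⁻¹) (k * ((a - y0) ^ (k + 1))⁻¹) y0 := by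
  have h1 : HasDerivAt (fun y : ℂ => a - y) (-1) y0 := by
    simpa using (hasDerivAt_id y0).const_sub a
  have h2 := h1.fun_pow k
  have h3 := h2.fun_inv (pow_ne_zero k h)
  refine h3.congr_deriv ?_
  rcases k with _ | m
  · simp
  · have hm : (a - y0) ^ (m + 1) ≠ 0 := pow_ne_zero _ h
    simp only [Nat.add_sub_cancel]
    field_simp
    ring

lemma hasDerivAt_Sig (hy0 : y0 ≠ 0) (hy1 : y0 ≠ 1) (hyx : y0 ≠ x) (k : ℕ) :
    HasDerivAt (fun y => Sig x y k) ((k : ℂ) * Sig x y0 (k + 1)) y0 := by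
  have e0 : (0 : ℂ) - y0 ≠ 0 := by simpa using hy0
  have e1 : (1 : ℂ) - y0 ≠ 0 := sub_ne_zero.2 (Ne.symm hy1)
  have ex : x - y0 ≠ 0 := sub_ne_zero.2 (Ne.symm hyx)
  have h := ((hasDerivAt_inv_pow (0 : ℂ) e0 k).fun_add (hasDerivAt_inv_pow 1 e1 k)).fun_add
    (hasDerivAt_inv_pow x ex k)
  have hfun : (fun y => ((0 - y) ^ k)⁻¹ + ((1 - y) ^ k)⁻¹ + ((x - y) ^ k)⁻¹)
      = fun y => Sig x y k := by
    funext y; simp [Sig, zero_sub]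
  rw [hfun] at h
  refine h.congr_deriv ?_
  simp [Sig, zero_sub]
  ring

/-- derivative summand -/
noncomputable def Ed (x y0 : ℂ) {N : ℕ} (p : Fin N → ℕ) (j : Fin N) : ℂ :=
  (∏ i ∈ univ.erase j, Sig x y0 (i.1 + 1) ^ p i) *
    ((p j : ℂ) * Sig x y0 (j.1 + 1) ^ (p j - 1) * (((j.1 : ℂ) + 1) * Sig x y0 (j.1 + 2)))

noncomputable def Tterm (x y0 : ℂ) (n : ℕ) {N : ℕ} (p : Fin N → ℕ) (j : Fin N) : ℂ :=
  (n.factorial : ℂ) * Ed x y0 p j /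
      (2 ^ (∑ i : Fin N, p i) * (∏ i : Fin N, ((p i).factorial : ℂ)) *
        ∏ i : Fin N, ((i.1 : ℂ) + 1) ^ p i)

lemma hasDerivAt_Wt (hy0 : y0 ≠ 0) (hy1 : y0 ≠ 1) (hyx : y0 ≠ x) (n : ℕ) {N : ℕ}
    (p : Fin N → ℕ) :
    HasDerivAt (fun y => Wt x y n p) (∑ j : Fin N, Tterm x y0 n p j) y0 := by
  have hP : HasDerivAt (fun y => ∏ i : Fin N, Sig x y (i.1 + 1) ^ p i)
      (∑ j : Fin N, Ed x y0 p j) y0 := by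
    have hf : ∀ i ∈ (univ : Finset (Fin N)), HasDerivAt (fun y => Sig x y (i.1 + 1) ^ p i)
        ((p i : ℂ) * Sig x y0 (i.1 + 1) ^ (p i - 1) * (((i.1 : ℂ) + 1) * Sig x y0 (i.1 + 2)))
        y0 := by
      intro i _
      have := (hasDerivAt_Sig (x := x) hy0 hy1 hyx (i.1 + 1)).fun_pow (p i)
      simpa [Nat.cast_add, Nat.cast_one] using this
    have := HasDerivAt.fun_finsetProd (u := univ) hf
    simpa [Ed, smul_eq_mul] using this
  have := (hP.const_mul ((n.factorial : ℂ))).div_const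
      (2 ^ (∑ i : Fin N, p i) * (∏ i : Fin N, ((p i).factorial : ℂ)) *
        ∏ i : Fin N, ((i.1 : ℂ) + 1) ^ p i)
  have hsum : (n.factorial : ℂ) * (∑ j : Fin N, Ed x y0 p j) /
      (2 ^ (∑ i : Fin N, p i) * (∏ i : Fin N, ((p i).factorial : ℂ)) *
        ∏ i : Fin N, ((i.1 : ℂ) + 1) ^ p i) = ∑ j : Fin N, Tterm x y0 n p j := by
    rw [Finset.mul_sum, Finset.sum_div]
    rfl
  rw [hsum] at this
  exact this

end Deriv

lemma cast_factorial_ne_zero (m : ℕ) : ((m.factorial : ℂ)) ≠ 0 :=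
  Nat.cast_ne_zero.2 (Nat.factorial_ne_zero m)

lemma cast_succ_ne_zero (m : ℕ) : ((m : ℂ) + 1) ≠ 0 := by
  exact Nat.cast_add_one_ne_zero m

lemma prod_fact_ne_zero {N : ℕ} (s : Finset (Fin N)) (p : Fin N → ℕ) :
    (∏ i ∈ s, ((p i).factorial : ℂ)) ≠ 0 :=
  Finset.prod_ne_zero_iff.2 fun i _ => cast_factorial_ne_zero _

lemma prod_pow_ne_zero {N : ℕ} (s : Finset (Fin N)) (p : Fin N → ℕ) :
    (∏ i ∈ s, ((i.1 : ℂ) + 1) ^ p i) ≠ 0 :=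
  Finset.prod_ne_zero_iff.2 fun i _ => pow_ne_zero _ (cast_succ_ne_zero _)

section UpdLemmas

variable {N : ℕ} (x y : ℂ) (p : Fin N → ℕ) (a : Fin N) (v : ℕ)

lemma upd_prod_sig :
    ∏ i : Fin N, Sig x y (i.1 + 1) ^ Function.update p a v i =
      Sig x y (a.1 + 1) ^ v * ∏ i ∈ univ.erase a, Sig x y (i.1 + 1) ^ p i :=
  prod_comp_update' univ (fun i t => Sig x y (i.1 + 1) ^ t) p a v (mem_univ a)

lemma upd_sum :
    ∑ i : Fin N, Function.update p a v i = v + ∑ i ∈ univ.erase a, p i :=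
  sum_comp_update' univ (fun _ t => t) p a v (mem_univ a)

lemma upd_prod_fact :
    ∏ i : Fin N, (((Function.update p a v i).factorial : ℂ)) =
      (v.factorial : ℂ) * ∏ i ∈ univ.erase a, ((p i).factorial : ℂ) :=
  prod_comp_update' univ (fun _ t => ((t.factorial : ℂ))) p a v (mem_univ a)

lemma upd_prod_pow :
    ∏ i : Fin N, ((i.1 : ℂ) + 1) ^ Function.update p a v i =
      ((a.1 : ℂ) + 1) ^ v * ∏ i ∈ univ.erase a, ((i.1 : ℂ) + 1) ^ p i :=
  prod_comp_update' univ (fun i t => ((i.1 : ℂ) + 1) ^ t) p a v (mem_univ a)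

lemma base_prod_sig :
    ∏ i : Fin N, Sig x y (i.1 + 1) ^ p i =
      Sig x y (a.1 + 1) ^ p a * ∏ i ∈ univ.erase a, Sig x y (i.1 + 1) ^ p i :=
  prod_eq_mul_erase univ _ a (mem_univ a)

lemma base_sum :
    ∑ i : Fin N, p i = p a + ∑ i ∈ univ.erase a, p i :=
  sum_eq_add_erase univ _ a (mem_univ a)

lemma base_prod_fact :
    ∏ i : Fin N, (((p i).factorial : ℂ)) =
      ((p a).factorial : ℂ) * ∏ i ∈ univ.erase a, ((p i).factorial : ℂ) :=
  prod_eq_mul_erase univ _ a (mem_univ a)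

lemma base_prod_pow :
    ∏ i : Fin N, ((i.1 : ℂ) + 1) ^ p i =
      ((a.1 : ℂ) + 1) ^ p a * ∏ i ∈ univ.erase a, ((i.1 : ℂ) + 1) ^ p i :=
  prod_eq_mul_erase univ _ a (mem_univ a)

end UpdLemmas

set_option maxHeartbeats 1000000 in
lemma Vt_bump (x y : ℂ) {N : ℕ} (p : Fin N → ℕ) (a : Fin N) :
    Vt x y (Function.update p a (p a + 1)) =
      Vt x y p * Sig x y (a.1 + 1) / (2 * ((p a : ℂ) + 1) * ((a.1 : ℂ) + 1)) := by
  rw [Vt, Vt, upd_prod_sig, upd_sum, upd_prod_fact, upd_prod_pow,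
    base_prod_sig x y p a, base_sum p a, base_prod_fact p a, base_prod_pow p a]
  have hF := prod_fact_ne_zero (univ.erase a) p
  have hE := prod_pow_ne_zero (univ.erase a) p
  have h2 : (2 : ℂ) ≠ 0 := two_ne_zero
  have h2s : (2 : ℂ) ^ (∑ i ∈ univ.erase a, p i) ≠ 0 := pow_ne_zero _ h2
  have hfa := cast_factorial_ne_zero (p a)
  have hpa : ((p a : ℂ) + 1) ≠ 0 := cast_succ_ne_zero _
  have haa : ((a.1 : ℂ) + 1) ≠ 0 := cast_succ_ne_zero _
  have hapow : ((a.1 : ℂ) + 1) ^ p a ≠ 0 := pow_ne_zero _ haa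
  simp only [Nat.factorial_succ, Nat.cast_mul, Nat.cast_add, Nat.cast_one, pow_succ, pow_add]
  field_simp

lemma Tterm_zero (x y0 : ℂ) (n : ℕ) {N : ℕ} (p : Fin N → ℕ) (j : Fin N) (h : p j = 0) :
    Tterm x y0 n p j = 0 := by
  simp [Tterm, Ed, h]

set_option maxHeartbeats 1000000 in
lemma Tterm_eq (x y0 : ℂ) (n : ℕ) {N : ℕ} (p : Fin N → ℕ) (j : Fin N) (h : p j ≠ 0) :
    Tterm x y0 n p j =
      (n.factorial : ℂ) * Vt x y0 (Function.update p j (p j - 1)) * Sig x y0 (j.1 + 2) / 2 := by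
  obtain ⟨t, ht⟩ : ∃ t, p j = t + 1 := ⟨p j - 1, by omega⟩
  rw [Tterm, Ed, Vt, upd_prod_sig, upd_sum, upd_prod_fact, upd_prod_pow,
    base_sum p j, base_prod_fact p j, base_prod_pow p j]
  have hF := prod_fact_ne_zero (univ.erase j) p
  have hE := prod_pow_ne_zero (univ.erase j) p
  have h2 : (2 : ℂ) ≠ 0 := two_ne_zero
  have h2s : (2 : ℂ) ^ (∑ i ∈ univ.erase j, p i) ≠ 0 := pow_ne_zero _ h2
  have hjj : ((j.1 : ℂ) + 1) ≠ 0 := cast_succ_ne_zero _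
  have hjpow : ((j.1 : ℂ) + 1) ^ t ≠ 0 := pow_ne_zero _ hjj
  have hft := cast_factorial_ne_zero t
  have htt : ((t : ℂ) + 1) ≠ 0 := cast_succ_ne_zero _
  have h2t : (2 : ℂ) ^ t ≠ 0 := pow_ne_zero _ h2
  rw [ht]
  simp only [Nat.add_sub_cancel, Nat.factorial_succ, Nat.cast_mul, Nat.cast_add, Nat.cast_one,
    pow_succ, pow_add]
  simp only [mul_div_assoc', div_mul_eq_mul_div, div_div]
  rw [div_eq_div_iff (by apply_rules [mul_ne_zero, pow_ne_zero]) (by apply_rules [mul_ne_zero, pow_ne_zero])]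
  ring

lemma Lsum_one (x y : ℂ) : Lsum x y 1 = Sig x y 1 / 2 := by
  rw [Lsum_eq]
  have hset : Aset 1 1 = {fun _ => 1} := by
    ext p
    rw [mem_Aset, Finset.mem_singleton]
    rw [Fin.sum_univ_one]
    constructor
    · intro h
      funext i
      have : i = 0 := Subsingleton.elim _ _
      subst this
      simpa using h
    · intro h; subst h; simp
  rw [hset, Finset.sum_singleton, Wt]
  simp [Nat.factorial]

set_option maxHeartbeats 1000000 in
lemma claimA (x y0 : ℂ) (n : ℕ) :
    ∑ q ∈ Aset (n + 1) (n + 1), (q 0 : ℂ) * Wt x y0 (n + 1) q =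
      ((n : ℂ) + 1) * ((∑ p ∈ Aset (n + 1) n, Wt x y0 n p) * (Sig x y0 1 / 2)) := by
  rw [← Finset.sum_filter_of_ne (p := fun q => q 0 ≠ 0)
    (fun q _ hf h0 => hf (by simp [h0]))]
  rw [Finset.sum_mul, Finset.mul_sum]
  refine Finset.sum_nbij' (fun q => Function.update q 0 (q 0 - 1))
    (fun p => Function.update p 0 (p 0 + 1)) ?_ ?_ ?_ ?_ ?_
  · intro q hq
    rw [Finset.mem_filter, mem_Aset] at hq
    obtain ⟨hq, h0⟩ := hq
    rw [mem_Aset]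
    rw [sum_comp_update' univ (fun i t => (i.1 + 1) * t) q 0 _ (mem_univ 0)]
    rw [sum_eq_add_erase univ (fun i => (i.1 + 1) * q i) 0 (mem_univ 0)] at hq
    simp only [Fin.val_zero, zero_add, one_mul] at hq ⊢
    omega
  · intro p hp
    rw [mem_Aset] at hp
    rw [Finset.mem_filter, mem_Aset]
    constructor
    · rw [sum_comp_update' univ (fun i t => (i.1 + 1) * t) p 0 _ (mem_univ 0)]
      rw [sum_eq_add_erase univ (fun i => (i.1 + 1) * p i) 0 (mem_univ 0)] at hp
      simp only [Fin.val_zero, zero_add, one_mul] at hp ⊢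
      omega
    · simp
  · intro q hq
    rw [Finset.mem_filter] at hq
    funext i
    rcases eq_or_ne i 0 with rfl | hi
    · simp only [Function.update_self]
      have := hq.2
      simp only [ne_eq, decide_not] at this
      omega
    · simp [Function.update_of_ne hi]
  · intro p hp
    funext i
    rcases eq_or_ne i 0 with rfl | hi
    · simp only [Function.update_self]; omega
    · simp [Function.update_of_ne hi]
  · intro q hq
    rw [Finset.mem_filter] at hq
    obtain ⟨hq, h0⟩ := hq
    simp only [ne_eq, decide_not] at h0
    obtain ⟨t, ht⟩ : ∃ t, q 0 = t + 1 := ⟨q 0 - 1, by omega⟩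
    show (q 0 : ℂ) * Wt x y0 (n + 1) q =
      ((n : ℂ) + 1) * (Wt x y0 n (Function.update q 0 (q 0 - 1)) * (Sig x y0 1 / 2))
    rw [ht, Nat.add_sub_cancel]
    have hqp : Function.update (Function.update q 0 t) 0 ((Function.update q 0 t) 0 + 1) = q := by
      rw [Function.update_self, Function.update_idem, ← ht]
      exact Function.update_eq_self 0 q
    conv_lhs => rw [← hqp]
    rw [Wt_eq_Vt, Wt_eq_Vt, Vt_bump]
    simp only [Function.update_self, Fin.val_zero, Nat.cast_zero, zero_add, mul_one,
      Nat.factorial_succ, Nat.cast_mul, Nat.cast_add, Nat.cast_one]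
    have h1 : ((t : ℂ) + 1) ≠ 0 := cast_succ_ne_zero t
    field_simp

lemma Aset_last_zero {n : ℕ} {p : Fin (n + 1) → ℕ} (hp : p ∈ Aset (n + 1) n) :
    p (Fin.last n) = 0 := by
  rw [mem_Aset] at hp
  by_contra h
  have h1 : ((Fin.last n).1 + 1) * p (Fin.last n) ≤ ∑ i : Fin (n + 1), (i.1 + 1) * p i :=
    Finset.single_le_sum (f := fun i : Fin (n + 1) => (i.1 + 1) * p i)
      (fun _ _ => Nat.zero_le _) (mem_univ _)
  simp only [Fin.val_last] at h1
  have h2 : n + 1 ≤ (n + 1) * p (Fin.last n) :=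
    Nat.le_mul_of_pos_right _ (Nat.pos_of_ne_zero h)
  omega

lemma update2_cancel {N : ℕ} (q P : Fin N → ℕ) (b c : Fin N) (hbc : b ≠ c) (hqc : q c ≠ 0)
    (hP : P = Function.update (Function.update q c (q c - 1)) b (q b + 1)) :
    Function.update (Function.update P b (P b - 1)) c (P c + 1) = q := by
  have hPb : P b = q b + 1 := by rw [hP, Function.update_self]
  have hPc : P c = q c - 1 := by
    rw [hP, Function.update_of_ne (Ne.symm hbc), Function.update_self]
  funext i
  rcases eq_or_ne i c with rfl | hic
  · rw [Function.update_self, hPc]; omega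
  · rw [Function.update_of_ne hic]
    rcases eq_or_ne i b with rfl | hib
    · rw [Function.update_self, hPb, Nat.add_sub_cancel]
    · rw [Function.update_of_ne hib, hP, Function.update_of_ne hib, Function.update_of_ne hic]

set_option maxHeartbeats 1600000 in
lemma claimB (x y0 : ℂ) (n : ℕ) :
    ∑ q ∈ Aset (n + 1) (n + 1), ∑ j : Fin n,
        ((j.1 : ℂ) + 2) * (q j.succ : ℂ) * Wt x y0 (n + 1) q =
      ((n : ℂ) + 1) * ∑ p ∈ Aset (n + 1) n, ∑ j : Fin (n + 1), Tterm x y0 n p j := by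
  have hR : ∀ p ∈ Aset (n + 1) n, ∑ j : Fin (n + 1), Tterm x y0 n p j =
      ∑ j : Fin n, ((n : ℂ) + 1)⁻¹ * (((n : ℂ) + 1) * Tterm x y0 n p j.castSucc) := by
    intro p hp
    rw [Fin.sum_univ_castSucc, Tterm_zero x y0 n p _ (Aset_last_zero hp), add_zero]
    refine Finset.sum_congr rfl fun j _ => ?_
    rw [inv_mul_cancel_left₀ (Nat.cast_add_one_ne_zero n)]
  rw [Finset.sum_congr rfl hR, Finset.mul_sum]
  have hmove : ∀ p ∈ Aset (n + 1) n,
      ((n : ℂ) + 1) * ∑ j : Fin n, ((n : ℂ) + 1)⁻¹ * (((n : ℂ) + 1) * Tterm x y0 n p j.castSucc)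
        = ∑ j : Fin n, ((n : ℂ) + 1) * Tterm x y0 n p j.castSucc := by
    intro p _
    rw [Finset.mul_sum]
    refine Finset.sum_congr rfl fun j _ => ?_
    rw [mul_inv_cancel_left₀ (Nat.cast_add_one_ne_zero n)]
  rw [Finset.sum_congr rfl hmove]
  rw [← Finset.sum_product' (Aset (n + 1) (n + 1)) (univ : Finset (Fin n))
    (fun q j => ((j.1 : ℂ) + 2) * (q j.succ : ℂ) * Wt x y0 (n + 1) q)]
  rw [← Finset.sum_product' (Aset (n + 1) n) (univ : Finset (Fin n))
    (fun p j => ((n : ℂ) + 1) * Tterm x y0 n p j.castSucc)]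
  rw [← Finset.sum_filter_of_ne (s := Aset (n + 1) (n + 1) ×ˢ univ)
    (p := fun z => z.1 z.2.succ ≠ 0) (fun z _ hf h0 => hf (by simp [h0]))]
  rw [← Finset.sum_filter_of_ne (s := Aset (n + 1) n ×ˢ univ)
    (p := fun z => z.1 z.2.castSucc ≠ 0)
    (fun z _ hf h0 => hf (by rw [Tterm_zero x y0 n _ _ h0, mul_zero]))]
  refine Finset.sum_nbij'
    (fun z => (Function.update (Function.update z.1 z.2.succ (z.1 z.2.succ - 1))
      z.2.castSucc (z.1 z.2.castSucc + 1), z.2))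
    (fun z => (Function.update (Function.update z.1 z.2.castSucc (z.1 z.2.castSucc - 1))
      z.2.succ (z.1 z.2.succ + 1), z.2)) ?_ ?_ ?_ ?_ ?_
  · rintro ⟨q, j⟩ hz
    have hne : j.castSucc ≠ j.succ := j.castSucc_lt_succ.ne
    simp only [Finset.mem_filter, Finset.mem_product, mem_Aset, Finset.mem_univ, and_true] at hz ⊢
    obtain ⟨hsum, h0⟩ := hz
    constructor
    · rw [sum_comp_update' univ (fun i t => (i.1 + 1) * t) _ j.castSucc _ (mem_univ _),
        sum_comp_update' (univ.erase j.castSucc) (fun i t => (i.1 + 1) * t) q j.succ _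
          (Finset.mem_erase.2 ⟨(Ne.symm hne), mem_univ _⟩)]
      rw [sum_eq_add_erase univ (fun i => (i.1 + 1) * q i) j.castSucc (mem_univ _),
        sum_eq_add_erase (univ.erase j.castSucc) (fun i => (i.1 + 1) * q i) j.succ
          (Finset.mem_erase.2 ⟨(Ne.symm hne), mem_univ _⟩)] at hsum
      simp only [Fin.coe_castSucc, Fin.val_succ] at hsum ⊢
      obtain ⟨t, ht⟩ : ∃ t, q j.succ = t + 1 := ⟨q j.succ - 1, by omega⟩
      rw [ht] at hsum ⊢
      simp only [Nat.add_sub_cancel]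
      ring_nf
      ring_nf at hsum
      linarith
    · simp [Function.update_self]
  · rintro ⟨p, j⟩ hz
    have hne : j.castSucc ≠ j.succ := j.castSucc_lt_succ.ne
    simp only [Finset.mem_filter, Finset.mem_product, mem_Aset, Finset.mem_univ, and_true] at hz ⊢
    obtain ⟨hsum, h0⟩ := hz
    constructor
    · rw [sum_comp_update' univ (fun i t => (i.1 + 1) * t) _ j.succ _ (mem_univ _),
        sum_comp_update' (univ.erase j.succ) (fun i t => (i.1 + 1) * t) p j.castSucc _
          (Finset.mem_erase.2 ⟨hne, mem_univ _⟩)]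
      rw [sum_eq_add_erase univ (fun i => (i.1 + 1) * p i) j.succ (mem_univ _),
        sum_eq_add_erase (univ.erase j.succ) (fun i => (i.1 + 1) * p i) j.castSucc
          (Finset.mem_erase.2 ⟨hne, mem_univ _⟩)] at hsum
      simp only [Fin.coe_castSucc, Fin.val_succ] at hsum ⊢
      obtain ⟨t, ht⟩ : ∃ t, p j.castSucc = t + 1 := ⟨p j.castSucc - 1, by omega⟩
      rw [ht] at hsum ⊢
      simp only [Nat.add_sub_cancel]
      ring_nf
      ring_nf at hsum
      linarith
    · simp [Function.update_self]
  · rintro ⟨q, j⟩ hz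
    simp only [Finset.mem_filter, Finset.mem_product, mem_Aset, Finset.mem_univ, and_true] at hz
    have hne : j.castSucc ≠ j.succ := j.castSucc_lt_succ.ne
    simp only [Prod.mk.injEq]
    refine ⟨?_, trivial⟩
    exact update2_cancel q _ j.castSucc j.succ hne hz.2 rfl
  · rintro ⟨p, j⟩ hz
    simp only [Finset.mem_filter, Finset.mem_product, mem_Aset, Finset.mem_univ, and_true] at hz
    have hne : j.castSucc ≠ j.succ := j.castSucc_lt_succ.ne
    simp only [Prod.mk.injEq]
    refine ⟨?_, trivial⟩
    exact update2_cancel p _ j.succ j.castSucc (Ne.symm hne) hz.2 rfl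
  · rintro ⟨q, j⟩ hz
    simp only [Finset.mem_filter, Finset.mem_product, mem_Aset, Finset.mem_univ, and_true] at hz
    obtain ⟨hsum, h0⟩ := hz
    have hne : j.castSucc ≠ j.succ := j.castSucc_lt_succ.ne
    obtain ⟨t, ht⟩ : ∃ t, q j.succ = t + 1 := ⟨q j.succ - 1, by omega⟩
    show ((j.1 : ℂ) + 2) * (q j.succ : ℂ) * Wt x y0 (n + 1) q =
      ((n : ℂ) + 1) * Tterm x y0 n
        (Function.update (Function.update q j.succ (q j.succ - 1))
          j.castSucc (q j.castSucc + 1)) j.castSucc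
    rw [ht, Nat.add_sub_cancel]
    set X := Function.update q j.succ t with hX
    have hPcs : (Function.update X j.castSucc (q j.castSucc + 1)) j.castSucc ≠ 0 := by
      simp [Function.update_self]
    rw [Tterm_eq x y0 n _ _ hPcs]
    have e1 : Function.update (Function.update X j.castSucc (q j.castSucc + 1)) j.castSucc
        ((Function.update X j.castSucc (q j.castSucc + 1)) j.castSucc - 1) = X := by
      rw [Function.update_self, Nat.add_sub_cancel, Function.update_idem]
      have hXcs : q j.castSucc = X j.castSucc := by
        rw [hX, Function.update_of_ne hne]
      rw [hXcs]
      exact Function.update_eq_self _ X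
    rw [e1]
    have e2 : Function.update X j.succ (X j.succ + 1) = q := by
      rw [hX, Function.update_self, Function.update_idem, ← ht]
      exact Function.update_eq_self _ q
    conv_lhs => rw [← e2]
    rw [Wt_eq_Vt, Vt_bump]
    have hXsj : X j.succ = t := by rw [hX]; exact Function.update_self _ _ _
    rw [hXsj]
    simp only [Function.update_self, Fin.val_succ, Fin.coe_castSucc]
    have harg : j.1 + 1 + 1 = j.1 + 2 := rfl
    rw [harg]
    have h1 : ((t : ℂ) + 1) ≠ 0 := cast_succ_ne_zero t
    have h2 : ((j.1 : ℂ) + 1 + 1) ≠ 0 := by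
      have := cast_succ_ne_zero (j.1 + 1)
      push_cast at this
      exact this
    push_cast [Nat.factorial_succ]
    field_simp
    ring

lemma hsplit (x y0 : ℂ) (n : ℕ) :
    ((n : ℂ) + 1) * Lsum x y0 (n + 1) =
      (∑ q ∈ Aset (n + 1) (n + 1), (q 0 : ℂ) * Wt x y0 (n + 1) q) +
        ∑ q ∈ Aset (n + 1) (n + 1), ∑ j : Fin n,
          ((j.1 : ℂ) + 2) * (q j.succ : ℂ) * Wt x y0 (n + 1) q := by
  rw [Lsum_eq x y0 (n + 1), Finset.mul_sum, ← Finset.sum_add_distrib]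
  refine Finset.sum_congr rfl fun q hq => ?_
  have hq' := mem_Aset.1 hq
  have hcast : ((n : ℂ) + 1) = ∑ m : Fin (n + 1), ((m.1 : ℂ) + 1) * (q m : ℂ) := by
    have h1 : ((∑ m : Fin (n + 1), (m.1 + 1) * q m : ℕ) : ℂ) = ((n + 1 : ℕ) : ℂ) := by
      rw [hq']
    push_cast at h1
    rw [← h1]
  rw [hcast, Finset.sum_mul, Fin.sum_univ_succ]
  congr 1
  · simp
  · refine Finset.sum_congr rfl fun j _ => ?_
    rw [Fin.val_succ]
    push_cast
    ring

/-- Corollary 4.2: `∂_{y₀} L_n = L_{n+1} - L_n L_1` (with `x` held fixed). -/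
theorem stmt3 (x y0 : ℂ) (hx0 : x ≠ 0) (hx1 : x ≠ 1)
    (hy0 : y0 ≠ 0) (hy1 : y0 ≠ 1) (hyx : y0 ≠ x) (n : ℕ) :
    deriv (fun y => Lsum x y n) y0 =
      Lsum x y0 (n + 1) - Lsum x y0 n * Lsum x y0 1 := by
  have hD : HasDerivAt (fun y => Lsum x y n)
      (∑ p ∈ Aset (n + 1) n, ∑ j : Fin (n + 1), Tterm x y0 n p j) y0 := by
    have hfun : (fun y => Lsum x y n) = fun y => ∑ p ∈ Aset (n + 1) n, Wt x y n p :=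
      funext fun y => pad x y n
    rw [hfun]
    exact HasDerivAt.fun_sum fun p _ => hasDerivAt_Wt hy0 hy1 hyx n p
  rw [hD.deriv]
  have hne : ((n : ℂ) + 1) ≠ 0 := Nat.cast_add_one_ne_zero n
  refine mul_left_cancel₀ hne ?_
  rw [mul_sub, hsplit x y0 n, claimA x y0 n, claimB x y0 n, ← pad x y0 n, Lsum_one x y0]
  ring
end

section
/- With $L_n$ as the Bell-type polynomial in $\Sigma_k = (-y_0)^{-k}+(1-y_0)^{-k}+(x-y_0)^{-k}$, the partial derivative with respect to $x$ (holding $y_0$ fixed) satisfies $\partial_x L_n = -\tfrac12 \sum_{k=1}^{n} \frac{n!\, L_{n-k}}{(n-k)!\,(x-y_0)^{k+1}}$. -/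
open Finset

lemma hasDerivAt_sig (x y0 : ℂ) (hyx : x ≠ y0) (k : ℕ) :
    HasDerivAt (fun t => Sig t y0 k) (-(k : ℂ) * ((x - y0) ^ (k + 1))⁻¹) x := by
  have hz : x - y0 ≠ 0 := sub_ne_zero.mpr hyx
  have h1 : HasDerivAt (fun t : ℂ => t - y0) 1 x := (hasDerivAt_id x).sub_const y0
  have h2 : HasDerivAt (fun t : ℂ => (t - y0) ^ k) ((k:ℂ) * (x - y0) ^ (k-1) * 1) x := h1.pow k
  have h3 := h2.inv (pow_ne_zero k hz)
  have h4 : HasDerivAt (fun t => Sig t y0 k)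
      (-((k:ℂ) * (x - y0) ^ (k-1) * 1) / ((x - y0) ^ k) ^ 2) x := by
    have := h3.const_add (((-y0 : ℂ) ^ k)⁻¹ + ((1 - y0) ^ k)⁻¹)
    simpa [Sig, add_assoc] using this
  convert h4 using 1
  cases k with
  | zero => simp
  | succ m =>
    simp only [Nat.add_sub_cancel]
    field_simp
    ring
lemma zero_of_ge {N m : ℕ} {q : Fin N → ℕ} (hsum : ∑ i : Fin N, (i.1+1) * q i = m)
    (i : Fin N) (hi : m ≤ i.1) : q i = 0 := by
  have h1 : (i.1+1) * q i ≤ m := hsum ▸ Finset.single_le_sum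
    (f := fun i : Fin N => (i.1+1) * q i) (fun _ _ => Nat.zero_le _) (mem_univ i)
  rcases Nat.eq_zero_or_pos (q i) with h | h
  · exact h
  · have : i.1 + 1 ≤ (i.1+1) * q i := Nat.le_mul_of_pos_right _ h
    omega

lemma le_of_sum {N m : ℕ} {q : Fin N → ℕ} (hsum : ∑ i : Fin N, (i.1+1) * q i = m)
    (i : Fin N) : q i ≤ m := by
  have h1 : (i.1+1) * q i ≤ m := hsum ▸ Finset.single_le_sum
    (f := fun i : Fin N => (i.1+1) * q i) (fun _ _ => Nat.zero_le _) (mem_univ i)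
  calc q i ≤ (i.1+1) * q i := Nat.le_mul_of_pos_left _ (Nat.succ_pos _)
    _ ≤ m := h1

@[to_additive]
lemma prod_restrict {M : Type*} [CommMonoid M] {m N : ℕ} (h : m ≤ N)
    (f : ℕ → ℕ → M) (hf : ∀ i, f i 0 = 1) (q : Fin N → ℕ)
    (hq : ∀ i : Fin N, m ≤ i.1 → q i = 0) :
    ∏ i : Fin N, f i.1 (q i) = ∏ i : Fin m, f i.1 (q (Fin.castLE h i)) := by
  set Q : ℕ → ℕ := fun i => if h2 : i < N then q ⟨i, h2⟩ else 0 with hQ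
  have e1 : ∏ i : Fin N, f i.1 (q i) = ∏ i ∈ range N, f i (Q i) := by
    rw [← Fin.prod_univ_eq_prod_range (fun i => f i (Q i)) N]
    exact Finset.prod_congr rfl fun i _ => by simp [hQ, i.2]
  have e2 : ∏ i : Fin m, f i.1 (q (Fin.castLE h i)) = ∏ i ∈ range m, f i (Q i) := by
    rw [← Fin.prod_univ_eq_prod_range (fun i => f i (Q i)) m]
    refine Finset.prod_congr rfl fun i _ => by
      simp [hQ, lt_of_lt_of_le i.2 h]; rfl
  rw [e1, e2]
  exact (Finset.prod_subset (Finset.range_subset_range.mpr h) (fun i hiN him => by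
    rw [mem_range] at hiN
    simp only [hQ, dif_pos hiN]
    rw [hq ⟨i, hiN⟩ (by simpa using him), hf])).symm

/-- padding: `Lsum x y m` as a sum over multi-indices on `Fin N` for any `N ≥ m`. -/
lemma Lsum_pad (x y : ℂ) {m N : ℕ} (h : m ≤ N) :
    Lsum x y m = ∑ q ∈ (Fintype.piFinset fun _ : Fin N => Finset.range (m + 1)).filter
      (fun q => ∑ i : Fin N, (i.1 + 1) * q i = m),
    (m.factorial : ℂ) * (∏ i : Fin N, Sig x y (i.1 + 1) ^ q i) /
      (2 ^ (∑ i : Fin N, q i) * (∏ i : Fin N, ((q i).factorial : ℂ)) *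
        ∏ i : Fin N, ((i.1 : ℂ) + 1) ^ q i) := by
  rw [Lsum]
  refine Finset.sum_nbij' (i := fun p (i : Fin N) => if h2 : i.1 < m then p ⟨i.1, h2⟩ else 0)
    (j := fun q => q ∘ Fin.castLE h) ?_ ?_ ?_ ?_ ?_
  · intro p hp
    simp only [mem_filter, Fintype.mem_piFinset, mem_range] at hp ⊢
    have hsum : ∑ i : Fin N, (i.1+1) * (if h2 : i.1 < m then p ⟨i.1, h2⟩ else 0) = m := by
      rw [sum_restrict h (fun i a => (i+1) * a) (fun i => by simp)
        (fun i => if h2 : i.1 < m then p ⟨i.1, h2⟩ else 0)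
        (fun i hi => by simp [Nat.not_lt.mpr hi])]
      simpa using hp.2
    refine ⟨fun i => ?_, hsum⟩
    · split
      · exact hp.1 _
      · omega
  · intro q hq
    simp only [mem_filter, Fintype.mem_piFinset, mem_range] at hq ⊢
    have hz := fun i hi => zero_of_ge hq.2 i hi
    constructor
    · intro i; exact hq.1 _
    · have hr := sum_restrict h (fun i a => (i+1) * a) (fun i => by simp) q hz
      simp only [Function.comp_apply]
      rw [← hr]
      exact hq.2
  · intro p hp
    funext i
    simp [i.2]
  · intro q hq
    simp only [mem_filter, Fintype.mem_piFinset, mem_range] at hq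
    have hz := fun i hi => zero_of_ge hq.2 i hi
    funext i
    by_cases h2 : i.1 < m
    · simp [h2]
    · simp only [dif_neg h2]
      exact (hz i (Nat.not_lt.mp h2)).symm
  · intro p hp
    simp only [mem_filter, Fintype.mem_piFinset, mem_range] at hp
    set P : Fin N → ℕ := fun i => if h2 : i.1 < m then p ⟨i.1, h2⟩ else 0 with hP
    have hPz : ∀ i : Fin N, m ≤ i.1 → P i = 0 := fun i hi => by simp [hP, Nat.not_lt.mpr hi]
    have hPr : ∀ i : Fin m, P (Fin.castLE h i) = p i := fun i => by simp [hP, i.2]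
    have e1 : ∏ i : Fin N, Sig x y (i.1+1) ^ P i = ∏ i : Fin m, Sig x y (i.1+1) ^ p i := by
      rw [prod_restrict h (fun i a => Sig x y (i+1) ^ a) (fun i => by simp) P hPz]
      exact Finset.prod_congr rfl fun i _ => by rw [hPr]
    have e2 : ∑ i : Fin N, P i = ∑ i : Fin m, p i := by
      rw [sum_restrict h (fun _ a => a) (fun i => rfl) P hPz]
      exact Finset.sum_congr rfl fun i _ => hPr i
    have e3 : ∏ i : Fin N, ((P i).factorial : ℂ) = ∏ i : Fin m, ((p i).factorial : ℂ) := by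
      rw [prod_restrict h (fun _ a => ((a.factorial : ℂ))) (fun i => by simp) P hPz]
      exact Finset.prod_congr rfl fun i _ => by rw [hPr]
    have e4 : ∏ i : Fin N, ((i.1 : ℂ) + 1) ^ P i = ∏ i : Fin m, ((i.1 : ℂ) + 1) ^ p i := by
      rw [prod_restrict h (fun i a => ((i : ℂ) + 1) ^ a) (fun i => by simp) P hPz]
      exact Finset.prod_congr rfl fun i _ => by rw [hPr]
    rw [e1, e2, e3, e4]
/-- Lemma 4.2 (first form): `∂_x L_n = -(1/2) ∑_{k=1}^n n! L_{n-k} / ((n-k)! (x-y₀)^{k+1})`,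
with `y₀` held fixed. -/
theorem stmt4 (x y0 : ℂ) (hx0 : x ≠ 0) (hx1 : x ≠ 1)
    (hy0 : y0 ≠ 0) (hy1 : y0 ≠ 1) (hyx : x ≠ y0) (n : ℕ) :
    deriv (fun t => Lsum t y0 n) x =
      -(1 / 2 : ℂ) * ∑ k ∈ Finset.Icc 1 n,
        (n.factorial : ℂ) * Lsum x y0 (n - k) /
          (((n - k).factorial : ℂ) * (x - y0) ^ (k + 1)) := by
  classical
  have hz : x - y0 ≠ 0 := sub_ne_zero.mpr hyx
  have hL : HasDerivAt (fun t => Lsum t y0 n)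
      (∑ p ∈ (Fintype.piFinset fun _ : Fin n => Finset.range (n + 1)).filter
          (fun p => ∑ i : Fin n, (i.1 + 1) * p i = n),
        (n.factorial : ℂ) *
          (∑ j : Fin n, (∏ i ∈ univ.erase j, Sig x y0 (i.1 + 1) ^ p i) *
            ((p j : ℂ) * Sig x y0 (j.1 + 1) ^ (p j - 1) *
              (-((j.1 + 1 : ℕ) : ℂ) * ((x - y0) ^ (j.1 + 1 + 1))⁻¹))) /
          (2 ^ (∑ i : Fin n, p i) * (∏ i : Fin n, ((p i).factorial : ℂ)) *
            ∏ i : Fin n, ((i.1 : ℂ) + 1) ^ p i)) x := by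
    simp only [Lsum]
    refine HasDerivAt.fun_sum fun p _ => HasDerivAt.div_const (HasDerivAt.const_mul _ ?_) _
    have hp := HasDerivAt.fun_finsetProd (u := (univ : Finset (Fin n)))
      (f := fun (i : Fin n) t => Sig t y0 (i.1 + 1) ^ p i)
      (f' := fun j => (p j : ℂ) * Sig x y0 (j.1 + 1) ^ (p j - 1) *
        (-((j.1 + 1 : ℕ) : ℂ) * ((x - y0) ^ (j.1 + 1 + 1))⁻¹))
      (fun i _ => (hasDerivAt_sig x y0 hyx (i.1 + 1)).pow (p i))
    simpa [smul_eq_mul] using hp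
  rw [hL.deriv]
  set S := (Fintype.piFinset fun _ : Fin n => Finset.range (n + 1)).filter
      (fun p : Fin n → ℕ => ∑ i : Fin n, (i.1 + 1) * p i = n) with hSdef
  -- swap sums on the left
  rw [Finset.sum_congr rfl (fun p _ => by
    rw [Finset.mul_sum, Finset.sum_div] :
      ∀ p ∈ S, _ = ∑ j : Fin n,
        (n.factorial : ℂ) *
          ((∏ i ∈ univ.erase j, Sig x y0 (i.1 + 1) ^ p i) *
            ((p j : ℂ) * Sig x y0 (j.1 + 1) ^ (p j - 1) *
              (-((j.1 + 1 : ℕ) : ℂ) * ((x - y0) ^ (j.1 + 1 + 1))⁻¹))) /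
          (2 ^ (∑ i : Fin n, p i) * (∏ i : Fin n, ((p i).factorial : ℂ)) *
            ∏ i : Fin n, ((i.1 : ℂ) + 1) ^ p i)), Finset.sum_comm]
  -- reindex the right sum by Fin n
  rw [show Finset.Icc 1 n = Finset.Ico 1 (n+1) from (Finset.Ico_add_one_right_eq_Icc 1 n).symm,
    Finset.sum_Ico_eq_sum_range]
  simp only [Nat.add_sub_cancel]
  rw [← Fin.sum_univ_eq_sum_range (fun k =>
      (n.factorial : ℂ) * Lsum x y0 (n - (1 + k)) /
        (((n - (1 + k)).factorial : ℂ) * (x - y0) ^ ((1 + k) + 1))) n,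
    Finset.mul_sum]
  refine Finset.sum_congr rfl fun j _ => ?_
  -- fixed j : now identify the two sums
  set m := n - (1 + j.1) with hmdef
  have hmn : m ≤ n := Nat.sub_le _ _
  have hmk : m + (1 + j.1) = n := Nat.sub_add_cancel (by have := j.2; omega)
  rw [Lsum_pad x y0 hmn, Finset.mul_sum, Finset.sum_div, Finset.mul_sum]
  refine ((Finset.sum_filter_of_ne (p := fun p : Fin n → ℕ => p j ≠ 0) ?_).symm).trans ?_
  · intro p _ hne h0
    exact hne (by simp [h0])
  have hupd_sum : ∀ (f : Fin n → ℕ) (c : ℕ), (∑ i : Fin n, (i.1+1) * Function.update f j c i)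
      = (j.1+1) * c + ∑ i ∈ univ.erase j, (i.1+1) * f i := by
    intro f c
    rw [← Finset.add_sum_erase _ _ (mem_univ j), Function.update_self]
    exact congrArg _ (Finset.sum_congr rfl fun i hi => by
      rw [Function.update_of_ne (Finset.ne_of_mem_erase hi)])
  have hsplit : ∀ (f : Fin n → ℕ), (∑ i : Fin n, (i.1+1) * f i)
      = (j.1+1) * f j + ∑ i ∈ univ.erase j, (i.1+1) * f i :=
    fun f => (Finset.add_sum_erase _ _ (mem_univ j)).symm
  refine Finset.sum_nbij' (i := fun p => Function.update p j (p j - 1))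
    (j := fun q => Function.update q j (q j + 1)) ?_ ?_ ?_ ?_ ?_
  · intro p hp
    simp only [hSdef, Finset.mem_filter, Fintype.mem_piFinset, Finset.mem_range] at hp ⊢
    obtain ⟨⟨hp1, hp2⟩, hpj⟩ := hp
    obtain ⟨d, hd⟩ : ∃ d, p j = d + 1 := ⟨p j - 1, by omega⟩
    have hsum : ∑ i : Fin n, (i.1+1) * Function.update p j (p j - 1) i = m := by
      rw [hupd_sum]
      have := hsplit p
      rw [hd] at this ⊢
      simp only [Nat.add_sub_cancel]
      have hmul : (j.1+1) * (d+1) = (j.1+1) * d + (j.1+1) := by ring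
      have hj2 := j.2
      omega
    exact ⟨fun i => Nat.lt_succ_of_le (le_of_sum hsum i), hsum⟩
  · intro q hq
    simp only [hSdef, Finset.mem_filter, Fintype.mem_piFinset, Finset.mem_range] at hq ⊢
    obtain ⟨hq1, hq2⟩ := hq
    have hsum : ∑ i : Fin n, (i.1+1) * Function.update q j (q j + 1) i = n := by
      rw [hupd_sum]
      have := hsplit q
      have hmul : (j.1+1) * (q j+1) = (j.1+1) * q j + (j.1+1) := by ring
      have hj2 := j.2
      omega
    refine ⟨⟨fun i => Nat.lt_succ_of_le (le_of_sum hsum i), hsum⟩, ?_⟩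
    simp [Function.update_self]
  · intro p hp
    simp only [hSdef, Finset.mem_filter] at hp
    funext i
    rcases eq_or_ne i j with rfl | hij
    · simp only [Function.update_self]
      have := hp.2
      omega
    · simp [Function.update_of_ne hij]
  · intro q hq
    funext i
    rcases eq_or_ne i j with rfl | hij
    · simp [Function.update_self]
    · simp [Function.update_of_ne hij]
  · intro p hp
    simp only [hSdef, Finset.mem_filter, Fintype.mem_piFinset, Finset.mem_range] at hp
    obtain ⟨⟨hp1, hp2⟩, hpj⟩ := hp
    obtain ⟨d, hd⟩ : ∃ d, p j = d + 1 := ⟨p j - 1, by omega⟩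
    have hupd : ∀ (c : ℕ), ∀ i ∈ univ.erase j, Function.update p j c i = p i :=
      fun c i hi => Function.update_of_ne (Finset.ne_of_mem_erase hi) _ _
    set A := ∏ i ∈ univ.erase j, Sig x y0 (i.1+1) ^ p i with hA
    set s0 := ∑ i ∈ univ.erase j, p i with hs0
    set F0 := ∏ i ∈ univ.erase j, ((p i).factorial : ℂ) with hF0
    set P0 := ∏ i ∈ univ.erase j, ((i.1:ℂ)+1) ^ p i with hP0
    have h1 : ∑ i : Fin n, p i = (d+1) + s0 := by
      rw [← Finset.add_sum_erase _ _ (mem_univ j), hd]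
    have h2 : ∏ i : Fin n, ((p i).factorial : ℂ) = ((d+1).factorial : ℂ) * F0 := by
      rw [← Finset.mul_prod_erase _ _ (mem_univ j), hd]
    have h3 : ∏ i : Fin n, ((i.1:ℂ)+1) ^ p i = ((j.1:ℂ)+1)^(d+1) * P0 := by
      rw [← Finset.mul_prod_erase _ _ (mem_univ j), hd]
    have h4 : ∏ i : Fin n, Sig x y0 (i.1+1) ^ Function.update p j (p j - 1) i
        = Sig x y0 (j.1+1) ^ d * A := by
      rw [← Finset.mul_prod_erase _ _ (mem_univ j), Function.update_self, hd]
      simp only [Nat.add_sub_cancel]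
      exact congrArg _ (Finset.prod_congr rfl fun i hi => by rw [hupd _ i hi])
    have h5 : ∑ i : Fin n, Function.update p j (p j - 1) i = d + s0 := by
      rw [← Finset.add_sum_erase _ _ (mem_univ j), Function.update_self, hd]
      simp only [Nat.add_sub_cancel]
      exact congrArg _ (Finset.sum_congr rfl fun i hi => by rw [hupd _ i hi])
    have h6 : ∏ i : Fin n, ((Function.update p j (p j - 1) i).factorial : ℂ)
        = (d.factorial : ℂ) * F0 := by
      rw [← Finset.mul_prod_erase _ _ (mem_univ j), Function.update_self, hd]
      simp only [Nat.add_sub_cancel]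
      exact congrArg _ (Finset.prod_congr rfl fun i hi => by rw [hupd _ i hi])
    have h7 : ∏ i : Fin n, ((i.1:ℂ)+1) ^ Function.update p j (p j - 1) i
        = ((j.1:ℂ)+1)^d * P0 := by
      rw [← Finset.mul_prod_erase _ _ (mem_univ j), Function.update_self, hd]
      simp only [Nat.add_sub_cancel]
      exact congrArg _ (Finset.prod_congr rfl fun i hi => by rw [hupd _ i hi])
    rw [h1, h2, h3, h4, h5, h6, h7, hd]
    simp only [Nat.add_sub_cancel]
    have hF0ne : F0 ≠ 0 := Finset.prod_ne_zero_iff.mpr fun i _ =>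
      Nat.cast_ne_zero.mpr (Nat.factorial_ne_zero _)
    have hP0ne : P0 ≠ 0 := Finset.prod_ne_zero_iff.mpr fun i _ => pow_ne_zero _ (by
      have : ((i.1:ℂ)+1) = ((i.1+1 : ℕ) : ℂ) := by push_cast; ring
      rw [this]
      exact Nat.cast_ne_zero.mpr (Nat.succ_ne_zero _))
    have hdne : (d.factorial : ℂ) ≠ 0 := Nat.cast_ne_zero.mpr (Nat.factorial_ne_zero _)
    have hmne : (m.factorial : ℂ) ≠ 0 := Nat.cast_ne_zero.mpr (Nat.factorial_ne_zero _)
    have hjne : ((j.1:ℂ)+1) ≠ 0 := by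
      have : ((j.1:ℂ)+1) = ((j.1+1 : ℕ) : ℂ) := by push_cast; ring
      rw [this]
      exact Nat.cast_ne_zero.mpr (Nat.succ_ne_zero _)
    obtain ⟨z, hZ⟩ : ∃ z, x - y0 = z := ⟨_, rfl⟩
    rw [hZ] at hz
    rw [hZ]
    have hd1 : ((d:ℂ) + 1) ≠ 0 := by
      have : ((d:ℂ)+1) = ((d+1 : ℕ) : ℂ) := by push_cast; ring
      rw [this]; exact Nat.cast_ne_zero.mpr (Nat.succ_ne_zero _)
    push_cast [Nat.factorial_succ]
    rw [show (n.factorial : ℂ) * (A * (((d:ℂ) + 1) * Sig x y0 (j.1 + 1) ^ d *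
            (-((j.1:ℂ) + 1) * (z ^ (j.1 + 1 + 1))⁻¹))) /
          (2 ^ (d + 1 + s0) * (((d:ℂ) + 1) * (d.factorial:ℂ) * F0) * (((j.1:ℂ) + 1) ^ (d + 1) * P0))
        = (-((n.factorial : ℂ) * A * ((d:ℂ) + 1) * Sig x y0 (j.1 + 1) ^ d * ((j.1:ℂ) + 1))) /
          ((2 ^ (d + 1 + s0) * (((d:ℂ) + 1) * (d.factorial:ℂ) * F0) * (((j.1:ℂ) + 1) ^ (d + 1) * P0)) *
            z ^ (j.1 + 1 + 1)) from by
          simp only [div_eq_mul_inv, mul_inv]; ring,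
        show -(1/2 : ℂ) * ((n.factorial : ℂ) * ((m.factorial:ℂ) * (Sig x y0 (j.1 + 1) ^ d * A) /
            (2 ^ (d + s0) * ((d.factorial:ℂ) * F0) * (((j.1:ℂ) + 1) ^ d * P0))) /
            ((m.factorial:ℂ) * z ^ (1 + j.1 + 1)))
        = (-(1/2 : ℂ) * (n.factorial : ℂ) * (m.factorial:ℂ) * Sig x y0 (j.1 + 1) ^ d * A) /
          ((2 ^ (d + s0) * ((d.factorial:ℂ) * F0) * (((j.1:ℂ) + 1) ^ d * P0)) *
            ((m.factorial:ℂ) * z ^ (1 + j.1 + 1))) from by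
          simp only [div_eq_mul_inv, mul_inv]; ring,
        div_eq_div_iff
          (by apply_rules [mul_ne_zero, pow_ne_zero, two_ne_zero, hF0ne, hP0ne, hdne, hmne, hjne, hd1, hz])
          (by apply_rules [mul_ne_zero, pow_ne_zero, two_ne_zero, hF0ne, hP0ne, hdne, hmne, hjne, hd1, hz])]
    ring
end

section
/- Let $f(y_0) = (y_0(y_0-1)(y_0-x))^{-1/2}$ and $L_n = f^{(n)}/f$ (derivatives in $y_0$). Then for every $n \ge 1$: $\frac{1}{f}\,\partial_{y_0}^n\!\left(\frac{f}{x-y_0}\right) = \frac{L_n}{x-y_0} - 2\,\partial_x L_n$, where $\partial_x L_n$ is the derivative of $L_n$ (viewed as a function of $x$ and $y_0$ via $\Sigma_k$) with $y_0$ held fixed. -/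
open Finset

noncomputable section
namespace S5

/-- index set -/
def idx (n : ℕ) : Finset (Fin n → ℕ) :=
  (Fintype.piFinset fun _ : Fin n => Finset.range (n + 1)).filter
    (fun p => ∑ i : Fin n, (i.1 + 1) * p i = n)

def cc (n : ℕ) (p : Fin n → ℕ) : ℂ :=
  (n.factorial : ℂ) /
    (2 ^ (∑ i : Fin n, p i) * (∏ i : Fin n, ((p i).factorial : ℂ)) *
      ∏ i : Fin n, ((i.1 : ℂ) + 1) ^ p i)

def BB (n : ℕ) (S : ℕ → ℂ) : ℂ := ∑ p ∈ idx n, cc n p * ∏ i : Fin n, S (i.1 + 1) ^ p i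

lemma mem_idx {n : ℕ} {p : Fin n → ℕ} : p ∈ idx n ↔ ∑ i : Fin n, (i.1 + 1) * p i = n := by
  constructor
  · exact fun h => (Finset.mem_filter.1 h).2
  · intro h
    refine Finset.mem_filter.2 ⟨Fintype.mem_piFinset.2 fun i => ?_, h⟩
    refine Finset.mem_range.2 (Nat.lt_succ_of_le ?_)
    calc p i ≤ (i.1 + 1) * p i := Nat.le_mul_of_pos_left _ (Nat.succ_pos _)
    _ ≤ ∑ i : Fin n, (i.1 + 1) * p i :=
        Finset.single_le_sum (f := fun i : Fin n => (i.1+1)*p i) (fun i _ => Nat.zero_le _) (Finset.mem_univ i)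
    _ = n := h

/-- extension of a `Fin n`-indexed family to `ℕ` by zero -/
def ext {n : ℕ} (p : Fin n → ℕ) : ℕ → ℕ := fun k => if h : k < n then p ⟨k, h⟩ else 0

lemma ext_lt {n : ℕ} (p : Fin n → ℕ) {k : ℕ} (h : k < n) : ext p k = p ⟨k, h⟩ := dif_pos h

lemma ext_fin {n : ℕ} (p : Fin n → ℕ) (i : Fin n) : ext p i.1 = p i := by
  rw [ext_lt p i.2]

lemma ext_ge {n : ℕ} (p : Fin n → ℕ) {k : ℕ} (h : n ≤ k) : ext p k = 0 :=
  dif_neg (by omega)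

lemma ext_inj {n : ℕ} {p q : Fin n → ℕ} (h : ext p = ext q) : p = q := by
  funext i
  have := congrFun h i.1
  rwa [ext_fin, ext_fin] at this

lemma prod_ext {M : Type*} [CommMonoid M] {n : ℕ} (p : Fin n → ℕ) (g : ℕ → ℕ → M) :
    ∏ i : Fin n, g i.1 (p i) = ∏ k ∈ Finset.range n, g k (ext p k) := by
  rw [← Fin.prod_univ_eq_prod_range (fun k => g k (ext p k)) n]
  exact Finset.prod_congr rfl fun i _ => by rw [ext_fin]

lemma sum_ext {n : ℕ} (p : Fin n → ℕ) (g : ℕ → ℕ → ℕ) :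
    ∑ i : Fin n, g i.1 (p i) = ∑ k ∈ Finset.range n, g k (ext p k) := by
  rw [← Fin.sum_univ_eq_sum_range (fun k => g k (ext p k)) n]
  exact Finset.sum_congr rfl fun i _ => by rw [ext_fin]

lemma prod_stable {M : Type*} [CommMonoid M] {m n : ℕ} (hmn : m ≤ n) (u : ℕ → ℕ)
    (h0 : ∀ k, m ≤ k → u k = 0) (g : ℕ → ℕ → M) (hg : ∀ k, g k 0 = 1) :
    ∏ k ∈ Finset.range n, g k (u k) = ∏ k ∈ Finset.range m, g k (u k) := by
  refine (Finset.prod_subset (Finset.range_subset_range.2 hmn) fun k _ hk => ?_).symm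
  rw [h0 k (by simpa using hk), hg]

lemma sum_stable {m n : ℕ} (hmn : m ≤ n) (u : ℕ → ℕ)
    (h0 : ∀ k, m ≤ k → u k = 0) (g : ℕ → ℕ → ℕ) (hg : ∀ k, g k 0 = 0) :
    ∑ k ∈ Finset.range n, g k (u k) = ∑ k ∈ Finset.range m, g k (u k) := by
  refine (Finset.sum_subset (Finset.range_subset_range.2 hmn) fun k _ hk => ?_).symm
  rw [h0 k (by simpa using hk), hg]

lemma ext_update {n : ℕ} (p : Fin n → ℕ) (jf : Fin n) (t : ℕ) :
    ext (Function.update p jf t) = Function.update (ext p) jf.1 t := by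
  funext k
  by_cases h : k < n
  · rw [ext_lt _ h]
    by_cases hk : k = jf.1
    · have hjf : (⟨k, h⟩ : Fin n) = jf := Fin.ext hk
      subst hk
      rw [hjf]
      simp
    · rw [Function.update_of_ne (fun hc => hk (by simpa using congrArg Fin.val hc)),
        Function.update_of_ne hk, ext_lt _ h]
  · rw [ext_ge _ (by omega), Function.update_of_ne (fun hc : k = jf.1 => h (hc ▸ jf.2)), ext_ge _ (by omega)]


-- chunk 2: the key combinatorial lemma
lemma term_le {n w : ℕ} (u : ℕ → ℕ) (hu : ∑ k ∈ Finset.range n, (k + 1) * u k = w)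
    (h0 : ∀ k, n ≤ k → u k = 0) (k : ℕ) : (k + 1) * u k ≤ w := by
  by_cases h : k < n
  · exact hu ▸ Finset.single_le_sum (f := fun k => (k + 1) * u k)
      (fun _ _ => Nat.zero_le _) (Finset.mem_range.2 h)
  · rw [h0 k (by omega)]; simp

lemma vanish {n w : ℕ} (u : ℕ → ℕ) (hu : ∑ k ∈ Finset.range n, (k + 1) * u k = w)
    (h0 : ∀ k, n ≤ k → u k = 0) : ∀ k, w ≤ k → u k = 0 := by
  intro k hk
  have h1 := term_le u hu h0 k
  by_contra h2
  have : k + 1 ≤ (k + 1) * u k := Nat.le_mul_of_pos_right _ (Nat.pos_of_ne_zero h2)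
  omega

lemma wt_ext {n : ℕ} {p : Fin n → ℕ} (hp : p ∈ idx n) :
    ∑ k ∈ Finset.range n, (k + 1) * ext p k = n := by
  rw [← sum_ext p (fun k t => (k + 1) * t)]
  exact mem_idx.1 hp

lemma ext_vanish {n : ℕ} {p : Fin n → ℕ} (_ : p ∈ idx n) : ∀ k, n ≤ k → ext p k = 0 :=
  fun k hk => ext_ge p hk

section KLsec

variable {n j : ℕ}

/-- forward map (removes one part of size `j+1`) -/
def phi (hj : j < n) (p : Fin n → ℕ) : Fin (n - (j + 1)) → ℕ := fun i =>
  Function.update p ⟨j, hj⟩ (p ⟨j, hj⟩ - 1) (Fin.castLE (by omega) i)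

/-- backward map (adds one part of size `j+1`) -/
def psi (hj : j < n) (q : Fin (n - (j + 1)) → ℕ) : Fin n → ℕ := fun i =>
  (if h : i.1 < n - (j + 1) then q ⟨i.1, h⟩ else 0) + (if i.1 = j then 1 else 0)

lemma wt_update (hj : j < n) {p : Fin n → ℕ} (hp : p ∈ idx n) (hne : p ⟨j, hj⟩ ≠ 0) :
    ∑ k ∈ Finset.range n, (k + 1) * Function.update (ext p) j (ext p j - 1) k = n - (j + 1) := by
  have hjr : j ∈ Finset.range n := Finset.mem_range.2 hj
  have h1 : (j + 1) * ext p j + ∑ k ∈ (Finset.range n).erase j, (k + 1) * ext p k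
      = ∑ k ∈ Finset.range n, (k + 1) * ext p k :=
    Finset.add_sum_erase (Finset.range n) (fun k => (k + 1) * ext p k) hjr
  have h2 : (j + 1) * Function.update (ext p) j (ext p j - 1) j
        + ∑ k ∈ (Finset.range n).erase j, (k + 1) * Function.update (ext p) j (ext p j - 1) k
      = ∑ k ∈ Finset.range n, (k + 1) * Function.update (ext p) j (ext p j - 1) k :=
    Finset.add_sum_erase (Finset.range n)
      (fun k => (k + 1) * Function.update (ext p) j (ext p j - 1) k) hjr
  have h3 : ∑ k ∈ (Finset.range n).erase j, (k + 1) * Function.update (ext p) j (ext p j - 1) k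
      = ∑ k ∈ (Finset.range n).erase j, (k + 1) * ext p k := by
    refine Finset.sum_congr rfl fun k hk => ?_
    rw [Function.update_of_ne (Finset.ne_of_mem_erase hk)]
  have h4 : ext p j = p ⟨j, hj⟩ := ext_lt p hj
  have h5 : Function.update (ext p) j (ext p j - 1) j = ext p j - 1 := by simp
  have h6 := wt_ext hp
  rw [h5] at h2
  rw [h3] at h2
  have hne' : ext p j ≠ 0 := by rwa [h4]
  obtain ⟨u', hu'⟩ : ∃ u', ext p j = u' + 1 := ⟨ext p j - 1, by omega⟩
  have e2 : (j + 1) * (u' + 1) = (j + 1) * u' + (j + 1) := by ring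
  rw [hu'] at h1 h2 ⊢
  simp only [Nat.add_sub_cancel] at h2 ⊢
  rw [e2] at h1
  omega

lemma ext_update_vanish (hj : j < n) {p : Fin n → ℕ} (hp : p ∈ idx n) (hne : p ⟨j, hj⟩ ≠ 0) :
    ∀ k, n - (j + 1) ≤ k → Function.update (ext p) j (ext p j - 1) k = 0 := by
  refine vanish _ (wt_update hj hp hne) (fun k hk => ?_)
  rw [Function.update_of_ne (by omega), ext_ge p hk]

lemma ext_phi (hj : j < n) {p : Fin n → ℕ} (hp : p ∈ idx n) (hne : p ⟨j, hj⟩ ≠ 0) :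
    ext (phi hj p) = Function.update (ext p) j (ext p j - 1) := by
  funext k
  by_cases h : k < n - (j + 1)
  · rw [ext_lt _ h]
    show Function.update p ⟨j, hj⟩ (p ⟨j, hj⟩ - 1) (Fin.castLE (by omega) ⟨k, h⟩) = _
    have h4 : ext p j = p ⟨j, hj⟩ := ext_lt p hj
    have := congrFun (ext_update p ⟨j, hj⟩ (p ⟨j, hj⟩ - 1)) k
    rw [ext_lt _ (show k < n by omega)] at this
    rw [← h4] at this ⊢
    exact this
  · rw [ext_ge _ (by omega), ext_update_vanish hj hp hne k (by omega)]

lemma ext_psi (hj : j < n) (q : Fin (n - (j + 1)) → ℕ) :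
    ext (psi hj q) = fun k => ext q k + (if k = j then 1 else 0) := by
  funext k
  by_cases h : k < n
  · rw [ext_lt _ h]
    show (if h' : k < n - (j + 1) then q ⟨k, h'⟩ else 0) + _ = _
    by_cases h' : k < n - (j + 1)
    · rw [dif_pos h', ext_lt _ h']
    · rw [dif_neg h', ext_ge _ (by omega)]
  · rw [ext_ge _ (by omega), ext_ge _ (by omega), if_neg (by omega)]

lemma phi_mem (hj : j < n) {p : Fin n → ℕ} (hp : p ∈ idx n) (hne : p ⟨j, hj⟩ ≠ 0) :
    phi hj p ∈ idx (n - (j + 1)) := by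
  rw [mem_idx, sum_ext _ (fun k t => (k + 1) * t), ext_phi hj hp hne,
    ← sum_stable (show n - (j+1) ≤ n by omega) _ (ext_update_vanish hj hp hne)
      (fun k t => (k + 1) * t) (fun k => by simp)]
  exact wt_update hj hp hne

lemma psi_vanish (hj : j < n) (q : Fin (n - (j + 1)) → ℕ) :
    ∀ k, n ≤ k → ext q k + (if k = j then 1 else 0) = 0 := fun k hk => by
  rw [ext_ge _ (by omega), if_neg (by omega)]

lemma psi_mem (hj : j < n) {q : Fin (n - (j + 1)) → ℕ} (hq : q ∈ idx (n - (j + 1))) :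
    psi hj q ∈ idx n := by
  rw [mem_idx, sum_ext _ (fun k t => (k + 1) * t), ext_psi hj q]
  have h1 : ∀ k ∈ Finset.range n, (k + 1) * (ext q k + (if k = j then 1 else 0))
      = (k + 1) * ext q k + (if k = j then k + 1 else 0) := by
    intro k _; by_cases h : k = j <;> simp [h] <;> ring
  rw [Finset.sum_congr rfl h1, Finset.sum_add_distrib, Finset.sum_ite_eq',
    if_pos (Finset.mem_range.2 hj),
    sum_stable (show n - (j+1) ≤ n by omega) _ (fun k hk => ext_ge q hk)
      (fun k t => (k + 1) * t) (fun k => by simp)]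
  have := wt_ext hq
  omega

lemma psi_ne (hj : j < n) {q : Fin (n - (j + 1)) → ℕ} : psi hj q ⟨j, hj⟩ ≠ 0 := by
  show (if h : j < n - (j + 1) then q ⟨j, h⟩ else 0) + (if j = j then 1 else 0) ≠ 0
  simp

lemma psi_phi (hj : j < n) {p : Fin n → ℕ} (hp : p ∈ idx n) (hne : p ⟨j, hj⟩ ≠ 0) :
    psi hj (phi hj p) = p := by
  apply ext_inj
  rw [ext_psi hj, ext_phi hj hp hne]
  funext k
  by_cases h : k = j
  · subst h
    have h4 : ext p k = p ⟨k, hj⟩ := ext_lt p hj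
    have h5 : ext p k ≠ 0 := by rw [h4]; exact hne
    simp only [Function.update_self, eq_self_iff_true, if_true]
    omega
  · simp [Function.update_of_ne h, h]

lemma phi_psi (hj : j < n) {q : Fin (n - (j + 1)) → ℕ} (hq : q ∈ idx (n - (j + 1))) :
    phi hj (psi hj q) = q := by
  apply ext_inj
  rw [ext_phi hj (psi_mem hj hq) (psi_ne hj), ext_psi hj]
  funext k
  by_cases h : k = j
  · subst h; simp
  · simp [Function.update_of_ne h, h]

lemma cc_eq {n : ℕ} (p : Fin n → ℕ) :
    cc n p = (n.factorial : ℂ) /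
      (2 ^ (∑ k ∈ Finset.range n, ext p k) * (∏ k ∈ Finset.range n, ((ext p k).factorial : ℂ)) *
        ∏ k ∈ Finset.range n, ((k : ℂ) + 1) ^ ext p k) := by
  rw [cc, sum_ext p (fun _ t => t), prod_ext p (fun _ t => ((t.factorial : ℂ))),
    prod_ext p (fun k t => ((k : ℂ) + 1) ^ t)]

lemma prod_powS_ext {n : ℕ} (S : ℕ → ℂ) (p : Fin n → ℕ) :
    ∏ i : Fin n, S (i.1 + 1) ^ p i = ∏ k ∈ Finset.range n, S (k + 1) ^ ext p k :=
  prod_ext p (fun k t => S (k + 1) ^ t)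

lemma fact_prod_ne {N : ℕ} (u : ℕ → ℕ) :
    (∏ k ∈ Finset.range N, ((u k).factorial : ℂ)) ≠ 0 :=
  Finset.prod_ne_zero_iff.2 fun k _ => Nat.cast_ne_zero.2 (Nat.factorial_ne_zero _)

lemma pow_prod_ne {N : ℕ} (u : ℕ → ℕ) :
    (∏ k ∈ Finset.range N, ((k : ℂ) + 1) ^ u k) ≠ 0 :=
  Finset.prod_ne_zero_iff.2 fun k _ => pow_ne_zero _ (Nat.cast_add_one_ne_zero k)

lemma KL_term {n j : ℕ} (hj : j < n) {p : Fin n → ℕ} (hp : p ∈ idx n)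
    (hne : p ⟨j, hj⟩ ≠ 0) (S : ℕ → ℂ) :
    cc n p * (p ⟨j, hj⟩ : ℂ) *
        ∏ i : Fin n, S (i.1 + 1) ^ Function.update p ⟨j, hj⟩ (p ⟨j, hj⟩ - 1) i =
      (n.factorial : ℂ) / (((n - (j + 1)).factorial : ℂ) * 2 * ((j : ℂ) + 1)) *
        (cc (n - (j + 1)) (phi hj p) *
          ∏ i : Fin (n - (j + 1)), S (i.1 + 1) ^ phi hj p i) := by
  have hjr : j ∈ Finset.range n := Finset.mem_range.2 hj
  set u := ext p with hu
  set v := Function.update (ext p) j (ext p j - 1) with hv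
  have huj : u j = p ⟨j, hj⟩ := ext_lt p hj
  have hujne : u j ≠ 0 := by rw [huj]; exact hne
  have hvj : v j = u j - 1 := by rw [hv]; simp [hu]
  have hoff : ∀ k, k ≠ j → v k = u k := fun k hk => Function.update_of_ne hk _ _
  have hsucc : u j = v j + 1 := by omega
  have hvan : ∀ k, n - (j + 1) ≤ k → v k = 0 := ext_update_vanish hj hp hne
  have hextphi : ext (phi hj p) = v := ext_phi hj hp hne
  -- products
  have hprod : (∏ i : Fin n, S (i.1 + 1) ^ Function.update p ⟨j, hj⟩ (p ⟨j, hj⟩ - 1) i)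
      = ∏ k ∈ Finset.range n, S (k + 1) ^ v k := by
    rw [prod_powS_ext, ext_update, hv]
    rw [ext_lt p hj]
  have hphiprod : (∏ i : Fin (n - (j + 1)), S (i.1 + 1) ^ phi hj p i)
      = ∏ k ∈ Finset.range n, S (k + 1) ^ v k := by
    rw [prod_powS_ext, hextphi]
    exact (prod_stable (Nat.sub_le n (j + 1)) v hvan (fun k t => S (k + 1) ^ t)
      (fun k => pow_zero _)).symm
  -- coefficients
  have hccn : cc n p = (n.factorial : ℂ) /
      (2 ^ (∑ k ∈ Finset.range n, u k) * (∏ k ∈ Finset.range n, ((u k).factorial : ℂ)) *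
        ∏ k ∈ Finset.range n, ((k : ℂ) + 1) ^ u k) := cc_eq p
  have hccm : cc (n - (j + 1)) (phi hj p) = ((n - (j + 1)).factorial : ℂ) /
      (2 ^ (∑ k ∈ Finset.range n, v k) * (∏ k ∈ Finset.range n, ((v k).factorial : ℂ)) *
        ∏ k ∈ Finset.range n, ((k : ℂ) + 1) ^ v k) := by
    rw [cc_eq, hextphi,
      sum_stable (Nat.sub_le n (j + 1)) v hvan (fun _ t => t) (fun _ => rfl),
      prod_stable (Nat.sub_le n (j + 1)) v hvan (fun _ t => ((t.factorial : ℂ))) (fun _ => by simp),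
      prod_stable (Nat.sub_le n (j + 1)) v hvan (fun k t => ((k : ℂ) + 1) ^ t)
        (fun k => pow_zero _)]
  -- splitting relations
  have ru : ∑ k ∈ Finset.range n, u k = (∑ k ∈ Finset.range n, v k) + 1 := by
    have a1 : u j + ∑ k ∈ (Finset.range n).erase j, u k = ∑ k ∈ Finset.range n, u k :=
      Finset.add_sum_erase _ u hjr
    have a2 : v j + ∑ k ∈ (Finset.range n).erase j, v k = ∑ k ∈ Finset.range n, v k :=
      Finset.add_sum_erase _ v hjr
    have a3 : ∑ k ∈ (Finset.range n).erase j, v k = ∑ k ∈ (Finset.range n).erase j, u k :=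
      Finset.sum_congr rfl fun k hk => hoff k (Finset.ne_of_mem_erase hk)
    omega
  have rF : (∏ k ∈ Finset.range n, ((u k).factorial : ℂ))
      = (u j : ℂ) * ∏ k ∈ Finset.range n, ((v k).factorial : ℂ) := by
    have a1 : ((u j).factorial : ℂ) * ∏ k ∈ (Finset.range n).erase j, ((u k).factorial : ℂ)
        = ∏ k ∈ Finset.range n, ((u k).factorial : ℂ) :=
      Finset.mul_prod_erase _ (fun k => ((u k).factorial : ℂ)) hjr
    have a2 : ((v j).factorial : ℂ) * ∏ k ∈ (Finset.range n).erase j, ((v k).factorial : ℂ)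
        = ∏ k ∈ Finset.range n, ((v k).factorial : ℂ) :=
      Finset.mul_prod_erase _ (fun k => ((v k).factorial : ℂ)) hjr
    have a3 : ∏ k ∈ (Finset.range n).erase j, ((v k).factorial : ℂ)
        = ∏ k ∈ (Finset.range n).erase j, ((u k).factorial : ℂ) :=
      Finset.prod_congr rfl fun k hk => by rw [hoff k (Finset.ne_of_mem_erase hk)]
    have a4 : (u j).factorial = u j * (v j).factorial := by
      rw [hvj]
      exact (Nat.mul_factorial_pred hujne).symm
    rw [← a1, ← a2, a3, a4]
    push_cast
    ring
  have rG : (∏ k ∈ Finset.range n, ((k : ℂ) + 1) ^ u k)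
      = ((j : ℂ) + 1) * ∏ k ∈ Finset.range n, ((k : ℂ) + 1) ^ v k := by
    have a1 : ((j : ℂ) + 1) ^ u j * ∏ k ∈ (Finset.range n).erase j, ((k : ℂ) + 1) ^ u k
        = ∏ k ∈ Finset.range n, ((k : ℂ) + 1) ^ u k :=
      Finset.mul_prod_erase _ (fun k : ℕ => ((k : ℂ) + 1) ^ u k) hjr
    have a2 : ((j : ℂ) + 1) ^ v j * ∏ k ∈ (Finset.range n).erase j, ((k : ℂ) + 1) ^ v k
        = ∏ k ∈ Finset.range n, ((k : ℂ) + 1) ^ v k :=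
      Finset.mul_prod_erase _ (fun k : ℕ => ((k : ℂ) + 1) ^ v k) hjr
    have a3 : ∏ k ∈ (Finset.range n).erase j, ((k : ℂ) + 1) ^ v k
        = ∏ k ∈ (Finset.range n).erase j, ((k : ℂ) + 1) ^ u k :=
      Finset.prod_congr rfl fun k hk => by rw [hoff k (Finset.ne_of_mem_erase hk)]
    have a4 : ((j : ℂ) + 1) ^ u j = ((j : ℂ) + 1) ^ v j * ((j : ℂ) + 1) := by
      rw [hsucc, pow_succ]
    rw [← a1, ← a2, a3, a4]
    ring
  have hcast : ((p ⟨j, hj⟩ : ℕ) : ℂ) = (u j : ℂ) := by rw [huj]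
  rw [hprod, hphiprod, hccn, hccm, ru, rF, rG, hcast]
  have n1 : (2 : ℂ) ^ (∑ k ∈ Finset.range n, v k) ≠ 0 := pow_ne_zero _ two_ne_zero
  have n2 : (∏ k ∈ Finset.range n, ((v k).factorial : ℂ)) ≠ 0 := fact_prod_ne v
  have n3 : (∏ k ∈ Finset.range n, ((k : ℂ) + 1) ^ v k) ≠ 0 := pow_prod_ne v
  have n4 : (u j : ℂ) ≠ 0 := Nat.cast_ne_zero.2 hujne
  have n5 : ((n - (j + 1)).factorial : ℂ) ≠ 0 := Nat.cast_ne_zero.2 (Nat.factorial_ne_zero _)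
  have n6 : ((j : ℂ) + 1) ≠ 0 := Nat.cast_add_one_ne_zero j
  rw [pow_succ]
  field_simp

lemma KL {n : ℕ} (j : ℕ) (hj : j < n) (S : ℕ → ℂ) :
    (∑ p ∈ idx n, cc n p * (p ⟨j, hj⟩ : ℂ) *
        ∏ i : Fin n, S (i.1 + 1) ^ Function.update p ⟨j, hj⟩ (p ⟨j, hj⟩ - 1) i) =
      (n.factorial : ℂ) / (((n - (j + 1)).factorial : ℂ) * 2 * ((j : ℂ) + 1)) *
        BB (n - (j + 1)) S := by
  rw [BB, Finset.mul_sum]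
  rw [← Finset.sum_filter_of_ne (p := fun p : Fin n → ℕ => p ⟨j, hj⟩ ≠ 0)
    (fun p _ hfp => by
      intro h0
      apply hfp
      rw [h0]
      simp)]
  refine Finset.sum_bij' (fun p _ => phi hj p) (fun q _ => psi hj q) ?_ ?_ ?_ ?_ ?_
  · intro p hp
    exact phi_mem hj (Finset.mem_filter.1 hp).1 (Finset.mem_filter.1 hp).2
  · intro q hq
    exact Finset.mem_filter.2 ⟨psi_mem hj hq, psi_ne hj⟩
  · intro p hp
    exact psi_phi hj (Finset.mem_filter.1 hp).1 (Finset.mem_filter.1 hp).2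
  · intro q hq
    exact phi_psi hj hq
  · intro p hp
    exact KL_term hj (Finset.mem_filter.1 hp).1 (Finset.mem_filter.1 hp).2 S

end KLsec

lemma BB_zero (S : ℕ → ℂ) : BB 0 S = 1 := by
  have h1 : idx 0 = {(fun _ => 0 : Fin 0 → ℕ)} := by
    apply Finset.eq_singleton_iff_unique_mem.2
    constructor
    · rw [mem_idx]; simp
    · intro p _; funext i; exact i.elim0
  rw [BB, h1, Finset.sum_singleton, cc]
  simp

lemma prod_pow_update {n : ℕ} (S : ℕ → ℂ) (p : Fin n → ℕ) (jf : Fin n) (t : ℕ) :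
    ∏ i : Fin n, S (i.1 + 1) ^ Function.update p jf t i
      = S (jf.1 + 1) ^ t * ∏ i ∈ Finset.univ.erase jf, S (i.1 + 1) ^ p i := by
  have h : (fun i : Fin n => S (i.1 + 1) ^ Function.update p jf t i)
      = Function.update (fun i : Fin n => S (i.1 + 1) ^ p i) jf (S (jf.1 + 1) ^ t) := by
    funext i
    by_cases hi : i = jf
    · subst hi; simp
    · rw [Function.update_of_ne hi, Function.update_of_ne hi]
  rw [h, Finset.prod_update_of_mem (Finset.mem_univ jf), Finset.sdiff_singleton_eq_erase]

lemma KLS {n : ℕ} (j : ℕ) (hj : j < n) (S : ℕ → ℂ) :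
    (∑ p ∈ idx n, cc n p * (p ⟨j, hj⟩ : ℂ) * ∏ i : Fin n, S (i.1 + 1) ^ p i) =
      (n.factorial : ℂ) / (((n - (j + 1)).factorial : ℂ) * 2 * ((j : ℂ) + 1)) *
        S (j + 1) * BB (n - (j + 1)) S := by
  have hterm : ∀ p ∈ idx n, cc n p * (p ⟨j, hj⟩ : ℂ) * ∏ i : Fin n, S (i.1 + 1) ^ p i
      = S (j + 1) * (cc n p * (p ⟨j, hj⟩ : ℂ) *
          ∏ i : Fin n, S (i.1 + 1) ^ Function.update p ⟨j, hj⟩ (p ⟨j, hj⟩ - 1) i) := by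
    intro p _
    by_cases h0 : p ⟨j, hj⟩ = 0
    · rw [h0]; simp
    · rw [prod_pow_update]
      have hfull : ∏ i : Fin n, S (i.1 + 1) ^ p i
          = S ((⟨j, hj⟩ : Fin n).1 + 1) ^ (p ⟨j, hj⟩) *
            ∏ i ∈ Finset.univ.erase (⟨j, hj⟩ : Fin n), S (i.1 + 1) ^ p i :=
        (Finset.mul_prod_erase _ _ (Finset.mem_univ _)).symm
      rw [hfull]
      have hpow : S ((⟨j, hj⟩ : Fin n).1 + 1) ^ (p ⟨j, hj⟩)
          = S (j + 1) * S ((⟨j, hj⟩ : Fin n).1 + 1) ^ (p ⟨j, hj⟩ - 1) := by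
        conv_lhs => rw [show p ⟨j, hj⟩ = (p ⟨j, hj⟩ - 1) + 1 by omega]
        rw [pow_succ]
        ring
      rw [hpow]
      ring
  rw [Finset.sum_congr rfl hterm, ← Finset.mul_sum, KL j hj S]
  ring

lemma BB_succ (n : ℕ) (S : ℕ → ℂ) :
    BB (n + 1) S = 2⁻¹ * ∑ j ∈ Finset.range (n + 1),
      ((n.factorial : ℂ) / ((n - j).factorial : ℂ)) * S (j + 1) * BB (n - j) S := by
  have hne : ((n : ℂ) + 1) ≠ 0 := Nat.cast_add_one_ne_zero n
  apply mul_left_cancel₀ hne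
  have lhs1 : ((n : ℂ) + 1) * BB (n + 1) S
      = ∑ p ∈ idx (n + 1), ∑ i : Fin (n + 1),
          (((i.1 : ℂ) + 1) * (p i : ℂ)) * (cc (n + 1) p * ∏ k : Fin (n + 1), S (k.1 + 1) ^ p k) := by
    rw [BB, Finset.mul_sum]
    refine Finset.sum_congr rfl fun p hp => ?_
    have hw : ∑ i : Fin (n + 1), (i.1 + 1) * p i = n + 1 := mem_idx.1 hp
    have hcast := congrArg (Nat.cast : ℕ → ℂ) hw
    push_cast at hcast
    rw [← hcast, Finset.sum_mul]
  rw [lhs1, Finset.sum_comm]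
  have inner : ∀ i : Fin (n + 1),
      (∑ p ∈ idx (n + 1), (((i.1 : ℂ) + 1) * (p i : ℂ)) *
        (cc (n + 1) p * ∏ k : Fin (n + 1), S (k.1 + 1) ^ p k))
      = (((n + 1).factorial : ℂ) / (((n - i.1).factorial : ℂ) * 2)) * S (i.1 + 1) * BB (n - i.1) S := by
    intro i
    have h1 := KLS i.1 i.2 S
    have heta : (⟨i.1, i.2⟩ : Fin (n + 1)) = i := rfl
    rw [heta] at h1
    have hsub : n + 1 - (i.1 + 1) = n - i.1 := by omega
    rw [hsub] at h1
    have h2 : (∑ p ∈ idx (n + 1), (((i.1 : ℂ) + 1) * (p i : ℂ)) *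
          (cc (n + 1) p * ∏ k : Fin (n + 1), S (k.1 + 1) ^ p k))
        = ((i.1 : ℂ) + 1) * ∑ p ∈ idx (n + 1), cc (n + 1) p * (p i : ℂ) *
            ∏ k : Fin (n + 1), S (k.1 + 1) ^ p k := by
      rw [Finset.mul_sum]
      exact Finset.sum_congr rfl fun p _ => by ring
    rw [h2, h1]
    have hne2 : ((i.1 : ℂ) + 1) ≠ 0 := Nat.cast_add_one_ne_zero i.1
    have hne3 : (((n - i.1).factorial : ℂ)) ≠ 0 := Nat.cast_ne_zero.2 (Nat.factorial_ne_zero _)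
    field_simp
  rw [Finset.sum_congr rfl (fun i _ => inner i)]
  rw [Fin.sum_univ_eq_sum_range
    (fun j => (((n + 1).factorial : ℂ) / (((n - j).factorial : ℂ) * 2)) * S (j + 1) * BB (n - j) S)
    (n + 1)]
  rw [Finset.mul_sum, Finset.mul_sum]
  refine Finset.sum_congr rfl fun j _ => ?_
  have hne3 : (((n - j).factorial : ℂ)) ≠ 0 := Nat.cast_ne_zero.2 (Nat.factorial_ne_zero _)
  have hfs : (((n + 1).factorial : ℕ) : ℂ) = ((n : ℂ) + 1) * (n.factorial : ℂ) := by
    rw [Nat.factorial_succ]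
    push_cast
    ring
  rw [hfs]
  field_simp

def DB (n : ℕ) (S D : ℕ → ℂ) : ℂ :=
  ∑ p ∈ idx n, cc n p *
    ∑ j : Fin n, (∏ i ∈ Finset.univ.erase j, S (i.1 + 1) ^ p i) *
      ((p j : ℂ) * S (j.1 + 1) ^ (p j - 1) * D (j.1 + 1))

lemma DB_eq (n : ℕ) (S D : ℕ → ℂ) :
    DB n S D = ∑ j ∈ Finset.range n,
      (n.factorial : ℂ) / (((n - (j + 1)).factorial : ℂ) * 2 * ((j : ℂ) + 1)) *
        D (j + 1) * BB (n - (j + 1)) S := by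
  rw [DB]
  have step1 : ∀ p ∈ idx n, cc n p *
      ∑ j : Fin n, (∏ i ∈ Finset.univ.erase j, S (i.1 + 1) ^ p i) *
        ((p j : ℂ) * S (j.1 + 1) ^ (p j - 1) * D (j.1 + 1))
      = ∑ j : Fin n, (cc n p * (p j : ℂ) *
          ∏ i : Fin n, S (i.1 + 1) ^ Function.update p j (p j - 1) i) * D (j.1 + 1) := by
    intro p _
    rw [Finset.mul_sum]
    refine Finset.sum_congr rfl fun j _ => ?_
    rw [prod_pow_update]
    ring
  rw [Finset.sum_congr rfl step1, Finset.sum_comm]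
  have inner : ∀ j : Fin n,
      (∑ p ∈ idx n, (cc n p * (p j : ℂ) *
          ∏ i : Fin n, S (i.1 + 1) ^ Function.update p j (p j - 1) i) * D (j.1 + 1))
      = (n.factorial : ℂ) / (((n - (j.1 + 1)).factorial : ℂ) * 2 * ((j.1 : ℂ) + 1)) *
          D (j.1 + 1) * BB (n - (j.1 + 1)) S := by
    intro j
    rw [← Finset.sum_mul]
    have h1 := KL j.1 j.2 S
    have heta : (⟨j.1, j.2⟩ : Fin n) = j := rfl
    rw [heta] at h1
    rw [h1]
    ring
  rw [Finset.sum_congr rfl (fun j _ => inner j)]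
  exact Fin.sum_univ_eq_sum_range
    (fun j => (n.factorial : ℂ) / (((n - (j + 1)).factorial : ℂ) * 2 * ((j : ℂ) + 1)) *
      D (j + 1) * BB (n - (j + 1)) S) n

/-- the key recursion `B_{n+1} = ∂_y B_n + (1/2) S₁ B_n` (chain-rule form) -/
lemma BB_rec (n : ℕ) (S : ℕ → ℂ) :
    BB (n + 1) S = DB n S (fun k => (k : ℂ) * S (k + 1)) + 2⁻¹ * S 1 * BB n S := by
  rw [BB_succ, DB_eq, Finset.sum_range_succ' _ n]
  rw [mul_add]
  congr 1
  · rw [Finset.mul_sum]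
    refine Finset.sum_congr rfl fun j _ => ?_
    have hne : ((j : ℂ) + 1) ≠ 0 := Nat.cast_add_one_ne_zero j
    have hc : (((j + 1 : ℕ)) : ℂ) = (j : ℂ) + 1 := by push_cast; ring
    rw [hc]
    have hsub : n - (j + 1) = n - 1 - j := by omega
    rw [hsub]
    have hF : (((n - 1 - j).factorial : ℕ) : ℂ) ≠ 0 := Nat.cast_ne_zero.2 (Nat.factorial_ne_zero _)
    have gen : ∀ a F c s B : ℂ, F ≠ 0 → c ≠ 0 →
        a / (F * 2 * c) * (c * s) * B = 2⁻¹ * (a / F * s * B) := by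
      intros a F c s B hF hc
      field_simp
    exact (gen _ _ _ _ _ hF hne).symm
  · have h0 : n - 0 = n := by omega
    rw [h0]
    have hne : ((n.factorial : ℕ) : ℂ) ≠ 0 := Nat.cast_ne_zero.2 (Nat.factorial_ne_zero _)
    rw [div_self hne]
    ring

lemma L5 (n : ℕ) (S : ℕ → ℂ) (T : ℂ) :
    BB n S * T - 2 * DB n S (fun k => -((k : ℂ) * T ^ (k + 1)))
      = ∑ k ∈ Finset.range (n + 1),
          (n.factorial : ℂ) / (k.factorial : ℂ) * T ^ (n - k + 1) * BB k S := by
  have hrefl := Finset.sum_range_reflect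
    (fun k => (n.factorial : ℂ) / (k.factorial : ℂ) * T ^ (n - k + 1) * BB k S) n
  rw [Finset.sum_range_succ, ← hrefl, DB_eq]
  have h3 : ∀ j ∈ Finset.range n,
      (n.factorial : ℂ) / (((n - 1 - j).factorial : ℂ)) * T ^ (n - (n - 1 - j) + 1) * BB (n - 1 - j) S
      = -(2 * ((n.factorial : ℂ) / (((n - (j + 1)).factorial : ℂ) * 2 * ((j : ℂ) + 1)) *
          (-(((j + 1 : ℕ) : ℂ) * T ^ (j + 1 + 1))) * BB (n - (j + 1)) S)) := by
    intro j hj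
    have hjn : j < n := Finset.mem_range.1 hj
    have e1 : n - 1 - j = n - (j + 1) := by omega
    have e2 : n - (n - 1 - j) + 1 = j + 1 + 1 := by omega
    rw [e2, e1]
    have hne : ((j : ℂ) + 1) ≠ 0 := Nat.cast_add_one_ne_zero j
    have hc : (((j + 1 : ℕ)) : ℂ) = (j : ℂ) + 1 := by push_cast; ring
    rw [hc]
    have hF : (((n - (j + 1)).factorial : ℕ) : ℂ) ≠ 0 := Nat.cast_ne_zero.2 (Nat.factorial_ne_zero _)
    have gen : ∀ a F c x B : ℂ, F ≠ 0 → c ≠ 0 →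
        a / F * x * B = -(2 * (a / (F * 2 * c) * -(c * x) * B)) := by
      intros a F c x B hF' hc'
      field_simp
    exact gen _ _ _ _ _ hF hne
  have h4 : (n.factorial : ℂ) / (n.factorial : ℂ) * T ^ (n - n + 1) * BB n S = BB n S * T := by
    rw [div_self (Nat.cast_ne_zero.2 (Nat.factorial_ne_zero _)), Nat.sub_self]
    ring
  rw [Finset.mul_sum, Finset.sum_congr rfl h3, Finset.sum_neg_distrib, h4]
  ring

lemma hasDerivAt_term (c y : ℂ) (h : c - y ≠ 0) {k : ℕ} (hk : k ≠ 0) :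
    HasDerivAt (fun z => ((c - z) ^ k)⁻¹) ((k : ℂ) * ((c - y) ^ (k + 1))⁻¹) y := by
  have h1 : HasDerivAt (fun z : ℂ => c - z) (-1) y := by
    simpa using (hasDerivAt_id y).const_sub c
  have h2 := h1.fun_pow k
  have h3 := h2.fun_inv (pow_ne_zero k h)
  convert! h3 using 1
  obtain ⟨k', rfl⟩ := Nat.exists_eq_succ_of_ne_zero hk
  simp only [Nat.succ_sub_one, Nat.succ_eq_add_one]
  field_simp
  ring

lemma hasDerivAt_Sig_y (x y : ℂ) (hy0 : y ≠ 0) (hy1 : y ≠ 1) (hxy : x - y ≠ 0)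
    {k : ℕ} (hk : k ≠ 0) :
    HasDerivAt (fun z => Sig x z k) ((k : ℂ) * Sig x y (k + 1)) y := by
  have h0 : (0 : ℂ) - y ≠ 0 := by simpa using hy0
  have h1 : (1 : ℂ) - y ≠ 0 := sub_ne_zero.2 (Ne.symm hy1)
  have h := ((hasDerivAt_term 0 y h0 hk).fun_add (hasDerivAt_term 1 y h1 hk)).fun_add
    (hasDerivAt_term x y hxy hk)
  convert! h using 1
  · funext z
    rw [Sig, zero_sub]
  · rw [Sig, zero_sub]
    ring

lemma hasDerivAt_Sig_x (x y : ℂ) (hxy : x - y ≠ 0) {k : ℕ} (hk : k ≠ 0) :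
    HasDerivAt (fun t => Sig t y k) (-((k : ℂ) * ((x - y) ^ (k + 1))⁻¹)) x := by
  have h1 : HasDerivAt (fun t : ℂ => t - y) 1 x := by
    simpa using (hasDerivAt_id x).sub_const y
  have h2 := (h1.fun_pow k).fun_inv (pow_ne_zero k hxy)
  have h3 := (hasDerivAt_const x (((-y) ^ k)⁻¹ + ((1 - y) ^ k)⁻¹)).fun_add h2
  have h4 : (fun t => Sig t y k)
      = fun t => ((-y) ^ k)⁻¹ + ((1 - y) ^ k)⁻¹ + ((t - y) ^ k)⁻¹ := by
    funext t
    rw [Sig]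
  rw [h4]
  convert! h3 using 1
  obtain ⟨k', rfl⟩ := Nat.exists_eq_succ_of_ne_zero hk
  simp only [Nat.succ_sub_one, Nat.succ_eq_add_one]
  field_simp
  ring

lemma hasDerivAt_BB (n : ℕ) (S : ℂ → ℕ → ℂ) (D : ℕ → ℂ) (y : ℂ)
    (hS : ∀ k, k ≠ 0 → HasDerivAt (fun z => S z k) (D k) y) :
    HasDerivAt (fun z => BB n (S z)) (DB n (S y) D) y := by
  unfold BB DB
  apply HasDerivAt.fun_sum
  intro p _
  apply HasDerivAt.const_mul
  have h := HasDerivAt.fun_finsetProd (u := (Finset.univ : Finset (Fin n)))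
    (f := fun i z => S z (i.1 + 1) ^ p i)
    (f' := fun i => (p i : ℂ) * S y (i.1 + 1) ^ (p i - 1) * D (i.1 + 1))
    (x := y)
    (fun i _ => (hS (i.1 + 1) (Nat.succ_ne_zero _)).pow (p i))
  simpa [smul_eq_mul] using h

lemma Lsum_eq_BB (x y : ℂ) (n : ℕ) : Lsum x y n = BB n (Sig x y) := by
  rw [Lsum, BB]
  refine Finset.sum_congr rfl fun p _ => ?_
  rw [cc, mul_div_right_comm]

lemma fact_cast_ne (k : ℕ) : ((k.factorial : ℕ) : ℂ) ≠ 0 :=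
  Nat.cast_ne_zero.2 (Nat.factorial_ne_zero _)

lemma Xstep (n : ℕ) (S : ℕ → ℂ) (T : ℂ) :
    2⁻¹ * S 1 * (∑ k ∈ Finset.range (n + 1),
        (n.factorial : ℂ) / (k.factorial : ℂ) * T ^ (n - k + 1) * BB k S)
      + ∑ k ∈ Finset.range (n + 1),
          ((n.factorial : ℂ) / (k.factorial : ℂ) *
              (((n - k + 1 : ℕ) : ℂ) * T ^ (n - k) * T ^ 2) * BB k S
            + (n.factorial : ℂ) / (k.factorial : ℂ) * T ^ (n - k + 1) *
                DB k S (fun l => (l : ℂ) * S (l + 1)))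
    = ∑ k ∈ Finset.range (n + 2),
        (((n + 1).factorial : ℂ) / (k.factorial : ℂ)) * T ^ (n + 1 - k + 1) * BB k S := by
  have hDB : ∀ k, DB k S (fun l => (l : ℂ) * S (l + 1)) = BB (k + 1) S - 2⁻¹ * S 1 * BB k S := by
    intro k
    rw [BB_rec k S]
    ring
  have split : ∀ k ∈ Finset.range (n + 1),
      ((n.factorial : ℂ) / (k.factorial : ℂ) *
          (((n - k + 1 : ℕ) : ℂ) * T ^ (n - k) * T ^ 2) * BB k S
        + (n.factorial : ℂ) / (k.factorial : ℂ) * T ^ (n - k + 1) *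
            DB k S (fun l => (l : ℂ) * S (l + 1)))
      = ((n.factorial : ℂ) / (k.factorial : ℂ) * ((n - k + 1 : ℕ) : ℂ) * T ^ (n - k + 2) * BB k S
          + (n.factorial : ℂ) / (k.factorial : ℂ) * T ^ (n - k + 1) * BB (k + 1) S)
        - 2⁻¹ * S 1 * ((n.factorial : ℂ) / (k.factorial : ℂ) * T ^ (n - k + 1) * BB k S) := by
    intro k _
    rw [hDB k]
    ring
  have LHSeq : 2⁻¹ * S 1 * (∑ k ∈ Finset.range (n + 1),
        (n.factorial : ℂ) / (k.factorial : ℂ) * T ^ (n - k + 1) * BB k S)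
      + ∑ k ∈ Finset.range (n + 1),
          ((n.factorial : ℂ) / (k.factorial : ℂ) *
              (((n - k + 1 : ℕ) : ℂ) * T ^ (n - k) * T ^ 2) * BB k S
            + (n.factorial : ℂ) / (k.factorial : ℂ) * T ^ (n - k + 1) *
                DB k S (fun l => (l : ℂ) * S (l + 1)))
      = (∑ k ∈ Finset.range (n + 1),
          (n.factorial : ℂ) / (k.factorial : ℂ) * ((n - k + 1 : ℕ) : ℂ) * T ^ (n - k + 2) * BB k S)
        + ∑ k ∈ Finset.range (n + 1),
            (n.factorial : ℂ) / (k.factorial : ℂ) * T ^ (n - k + 1) * BB (k + 1) S := by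
    rw [Finset.sum_congr rfl split, Finset.sum_sub_distrib, Finset.sum_add_distrib,
      ← Finset.mul_sum]
    ring
  rw [LHSeq]
  have grhs : ∀ k ∈ Finset.range (n + 2),
      (((n + 1).factorial : ℂ) / (k.factorial : ℂ)) * T ^ (n + 1 - k + 1) * BB k S
      = (n.factorial : ℂ) / (k.factorial : ℂ) * ((n + 1 - k : ℕ) : ℂ) * T ^ (n + 1 - k + 1) * BB k S
        + (n.factorial : ℂ) * (k : ℂ) / (k.factorial : ℂ) * T ^ (n + 1 - k + 1) * BB k S := by
    intro k hk
    have hcast : (((n + 1).factorial : ℕ) : ℂ) = ((n : ℂ) + 1) * (n.factorial : ℂ) := by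
      rw [Nat.factorial_succ]
      push_cast
      ring
    have hnat : (n + 1 - k) + k = n + 1 := by
      have := Finset.mem_range.1 hk
      omega
    have hsplit : ((n : ℂ) + 1) = ((n + 1 - k : ℕ) : ℂ) + (k : ℂ) := by
      have := congrArg (Nat.cast : ℕ → ℂ) hnat
      push_cast at this
      rw [this]
    rw [hcast, hsplit]
    ring
  rw [Finset.sum_congr rfl grhs, Finset.sum_add_distrib]
  congr 1
  · conv_rhs => rw [Finset.sum_range_succ]
    have hz : (n.factorial : ℂ) / (((n + 1).factorial : ℕ) : ℂ) * ((n + 1 - (n + 1) : ℕ) : ℂ) *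
        T ^ (n + 1 - (n + 1) + 1) * BB (n + 1) S = 0 := by
      rw [Nat.sub_self]
      simp
    rw [hz, add_zero]
    refine (Finset.sum_congr rfl fun k hk => ?_).symm
    have hkn : k ≤ n := by
      have := Finset.mem_range.1 hk
      omega
    have e1 : n + 1 - k = n - k + 1 := by omega
    have e2 : n + 1 - k + 1 = n - k + 2 := by omega
    rw [e2, e1]
  · conv_rhs => rw [Finset.sum_range_succ' _ (n + 1)]
    have hz : (n.factorial : ℂ) * ((0 : ℕ) : ℂ) / (((0 : ℕ).factorial : ℕ) : ℂ) *
        T ^ (n + 1 - 0 + 1) * BB 0 S = 0 := by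
      simp
    rw [hz, add_zero]
    refine (Finset.sum_congr rfl fun k _ => ?_).symm
    have e3 : n + 1 - (k + 1) + 1 = n - k + 1 := by omega
    rw [e3]
    have hfac : (((k + 1).factorial : ℕ) : ℂ) = ((k : ℂ) + 1) * ((k.factorial : ℕ) : ℂ) := by
      rw [Nat.factorial_succ]
      push_cast
      ring
    have hc1 : (((k + 1) : ℕ) : ℂ) = (k : ℂ) + 1 := by push_cast; ring
    rw [hfac, hc1]
    have h1 : ((k : ℂ) + 1) ≠ 0 := Nat.cast_add_one_ne_zero k
    have h2 : ((k.factorial : ℕ) : ℂ) ≠ 0 := fact_cast_ne k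
    field_simp

lemma f_ne {U : Set ℂ} {f : ℂ → ℂ} {x : ℂ}
    (hbranch : ∀ z ∈ U, f z ^ 2 * (z * (z - 1) * (z - x)) = 1)
    {z : ℂ} (hz : z ∈ U) : f z ≠ 0 := by
  intro h
  have := hbranch z hz
  rw [h] at this
  simp at this

lemma hasDerivAt_f {U : Set ℂ} {f : ℂ → ℂ} {x : ℂ} (hU : IsOpen U)
    (hUavoid : ∀ z ∈ U, z ≠ 0 ∧ z ≠ 1 ∧ z ≠ x)
    (hf : DifferentiableOn ℂ f U)
    (hbranch : ∀ z ∈ U, f z ^ 2 * (z * (z - 1) * (z - x)) = 1)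
    {y : ℂ} (hy : y ∈ U) :
    HasDerivAt f (f y * 2⁻¹ * Sig x y 1) y := by
  obtain ⟨hy0, hy1, hyx⟩ := hUavoid y hy
  have hfd : DifferentiableAt ℂ f y := hf.differentiableAt (hU.mem_nhds hy)
  have hfy : HasDerivAt f (deriv f y) y := hfd.hasDerivAt
  have hy1' : y - 1 ≠ 0 := sub_ne_zero.2 hy1
  have hyx' : y - x ≠ 0 := sub_ne_zero.2 hyx
  have hQ : y * (y - 1) * (y - x) ≠ 0 := mul_ne_zero (mul_ne_zero hy0 hy1') hyx'
  have hfy0 : f y ≠ 0 := f_ne hbranch hy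
  have hq : HasDerivAt (fun z : ℂ => z * (z - 1) * (z - x))
      ((y - 1) * (y - x) + y * (y - x) + y * (y - 1)) y := by
    have h1 := ((hasDerivAt_id y).fun_mul ((hasDerivAt_id y).sub_const 1)).fun_mul
      ((hasDerivAt_id y).sub_const x)
    convert! h1 using 1
    simp only [id_eq]
    ring
  have hprod := (hfy.pow 2).mul hq
  have hconst : HasDerivAt (fun z => f z ^ 2 * (z * (z - 1) * (z - x))) 0 y := by
    have hev : (fun z => f z ^ 2 * (z * (z - 1) * (z - x))) =ᶠ[nhds y] (fun _ => (1 : ℂ)) := by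
      filter_upwards [hU.mem_nhds hy] with z hz
      exact hbranch z hz
    exact (hasDerivAt_const y (1 : ℂ)).congr_of_eventuallyEq hev
  have heq := hprod.unique hconst
  norm_num at heq
  have hSig : (y * (y - 1) * (y - x)) * Sig x y 1
      = -((y - 1) * (y - x) + y * (y - x) + y * (y - 1)) := by
    rw [Sig]
    simp only [pow_one]
    have hny : (-y) ≠ 0 := neg_ne_zero.2 hy0
    have h1y : (1 : ℂ) - y ≠ 0 := sub_ne_zero.2 (Ne.symm hy1)
    have hxy : x - y ≠ 0 := sub_ne_zero.2 (Ne.symm hyx)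
    field_simp
    ring
  have h2 : (2 : ℂ) * (y * (y - 1) * (y - x)) * deriv f y
      = -(f y) * ((y - 1) * (y - x) + y * (y - x) + y * (y - 1)) := by
    apply mul_left_cancel₀ hfy0
    linear_combination heq
  have h3 : (2 : ℂ) * (y * (y - 1) * (y - x)) * (f y * 2⁻¹ * Sig x y 1)
      = -(f y) * ((y - 1) * (y - x) + y * (y - x) + y * (y - 1)) := by
    linear_combination f y * hSig
  have hd : deriv f y = f y * 2⁻¹ * Sig x y 1 :=
    mul_left_cancel₀ (mul_ne_zero two_ne_zero hQ) (h2.trans h3.symm)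
  rw [← hd]
  exact hfy

def XX (x y : ℂ) (n : ℕ) : ℂ :=
  ∑ k ∈ Finset.range (n + 1),
    (n.factorial : ℂ) / (k.factorial : ℂ) * ((x - y)⁻¹) ^ (n - k + 1) * BB k (Sig x y)

lemma hasDerivAt_fXX {U : Set ℂ} {f : ℂ → ℂ} {x : ℂ} (hU : IsOpen U)
    (hUavoid : ∀ z ∈ U, z ≠ 0 ∧ z ≠ 1 ∧ z ≠ x)
    (hf : DifferentiableOn ℂ f U)
    (hbranch : ∀ z ∈ U, f z ^ 2 * (z * (z - 1) * (z - x)) = 1)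
    {y : ℂ} (hy : y ∈ U) (n : ℕ) :
    HasDerivAt (fun z => f z * XX x z n) (f y * XX x y (n + 1)) y := by
  obtain ⟨hy0, hy1, hyx⟩ := hUavoid y hy
  have hxy : x - y ≠ 0 := sub_ne_zero.2 (Ne.symm hyx)
  have hT : HasDerivAt (fun z : ℂ => (x - z)⁻¹) (((x - y)⁻¹) ^ 2) y := by
    have h := hasDerivAt_term x y hxy (k := 1) one_ne_zero
    norm_num [← inv_pow] at h
    exact h
  have hXX : HasDerivAt (fun z => XX x z n)
      (∑ k ∈ Finset.range (n + 1),
        ((n.factorial : ℂ) / (k.factorial : ℂ) *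
            (((n - k + 1 : ℕ) : ℂ) * ((x - y)⁻¹) ^ (n - k) * ((x - y)⁻¹) ^ 2) * BB k (Sig x y)
          + (n.factorial : ℂ) / (k.factorial : ℂ) * ((x - y)⁻¹) ^ (n - k + 1) *
              DB k (Sig x y) (fun l => (l : ℂ) * Sig x y (l + 1)))) y := by
    unfold XX
    apply HasDerivAt.fun_sum
    intro k _
    have h1 : HasDerivAt (fun z : ℂ => ((x - z)⁻¹) ^ (n - k + 1))
        (((n - k + 1 : ℕ) : ℂ) * ((x - y)⁻¹) ^ (n - k) * ((x - y)⁻¹) ^ 2) y := by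
      have := hT.fun_pow (n - k + 1)
      simpa [Nat.add_sub_cancel] using this
    have h2 : HasDerivAt (fun z => BB k (Sig x z))
        (DB k (Sig x y) (fun l => (l : ℂ) * Sig x y (l + 1))) y :=
      hasDerivAt_BB k (fun z l => Sig x z l) _ y
        (fun l hl => hasDerivAt_Sig_y x y hy0 hy1 hxy hl)
    have h3 := (h1.const_mul ((n.factorial : ℂ) / (k.factorial : ℂ))).fun_mul h2
    convert h3 using 1
  have hfXX := (hasDerivAt_f hU hUavoid hf hbranch hy).fun_mul hXX
  convert! hfXX using 1
  rw [XX, XX]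
  rw [← Xstep n (Sig x y) ((x - y)⁻¹)]
  ring

lemma main_iter {U : Set ℂ} {f : ℂ → ℂ} {x : ℂ} (hU : IsOpen U)
    (hUavoid : ∀ z ∈ U, z ≠ 0 ∧ z ≠ 1 ∧ z ≠ x)
    (hf : DifferentiableOn ℂ f U)
    (hbranch : ∀ z ∈ U, f z ^ 2 * (z * (z - 1) * (z - x)) = 1) (n : ℕ) :
    ∀ y ∈ U, iteratedDeriv n (fun z => f z / (x - z)) y = f y * XX x y n := by
  induction n with
  | zero =>
    intro y hy
    rw [iteratedDeriv_zero, XX]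
    simp [BB_zero, div_eq_mul_inv]
  | succ n ih =>
    intro y hy
    rw [iteratedDeriv_succ]
    have hev : iteratedDeriv n (fun z => f z / (x - z)) =ᶠ[nhds y]
        fun z => f z * XX x z n :=
      Filter.eventuallyEq_of_mem (hU.mem_nhds hy) (fun z hz => ih z hz)
    rw [hev.deriv_eq]
    exact (hasDerivAt_fXX hU hUavoid hf hbranch hy n).deriv
end S5

/-- Lemma 4.2 (middle identity): for `n ≥ 1`,
`(1/f) ∂_{y₀}ⁿ (f/(x-y₀)) = L_n/(x-y₀) - 2 ∂_x L_n`, where `f` is a holomorphic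
branch of `(y(y-1)(y-x))^{-1/2}` and the `x`-derivative is taken with `y₀` fixed. -/
theorem stmt5 (x : ℂ) (hx0 : x ≠ 0) (hx1 : x ≠ 1)
    (U : Set ℂ) (hU : IsOpen U)
    (hUavoid : ∀ z ∈ U, z ≠ 0 ∧ z ≠ 1 ∧ z ≠ x)
    (f : ℂ → ℂ) (hf : DifferentiableOn ℂ f U)
    (hbranch : ∀ z ∈ U, (f z) ^ 2 * (z * (z - 1) * (z - x)) = 1)
    (y0 : ℂ) (hy : y0 ∈ U) (n : ℕ) (hn : 1 ≤ n) :
    (1 / f y0) * iteratedDeriv n (fun y => f y / (x - y)) y0 =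
      Lsum x y0 n / (x - y0) - 2 * deriv (fun t => Lsum t y0 n) x := by
  have hxy0 : x - y0 ≠ 0 := sub_ne_zero.2 (Ne.symm (hUavoid y0 hy).2.2)
  have hfne : f y0 ≠ 0 := S5.f_ne hbranch hy
  -- left-hand side
  rw [S5.main_iter hU hUavoid hf hbranch n y0 hy, one_div, inv_mul_cancel_left₀ hfne]
  -- the x-derivative
  have hDx : HasDerivAt (fun t => Lsum t y0 n)
      (S5.DB n (Sig x y0) (fun k => -((k : ℂ) * ((x - y0)⁻¹) ^ (k + 1)))) x := by
    have h := S5.hasDerivAt_BB n (fun t l => Sig t y0 l)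
      (fun k => -((k : ℂ) * ((x - y0)⁻¹) ^ (k + 1))) x
      (fun k hk => by
        have h2 := S5.hasDerivAt_Sig_x x y0 hxy0 hk
        rw [← inv_pow] at h2
        exact h2)
    have hfun : (fun t => Lsum t y0 n) = fun t => S5.BB n (Sig t y0) :=
      funext fun t => S5.Lsum_eq_BB t y0 n
    rw [hfun]
    exact h
  rw [hDx.deriv, S5.Lsum_eq_BB, div_eq_mul_inv,
    S5.L5 n (Sig x y0) ((x - y0)⁻¹)]
  rfl
end
end
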